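/- arXiv:1810.00122 — 9 statements merged into one kernel-verified Lean document; each statement's English description precedes it below -/
import Mathlib

section
/- Scaling property under orthogonal conjugation and rescaling: Let Q be a d×d real orthogonal matrix and μ > 0, γ > 0. Let (a_k, w_k) be the BNGD iterates for the configuration (H, u, a₀, w₀, ε_a, ε), and let (a'_k, w'_k) be the BNGD iterates for the configuration (H', u', a'₀, w'₀, ε_a, ε) where H' := μ Q H Qᵀ, u' := (γ/√μ) Q u, a'₀ := γ a₀, w'₀ := γ Q w₀. Then for every k ≥ 0 one has a'_k = γ a_k and w'_k = γ Q w_k. -/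
open Matrix Filter Topology

noncomputable section

/-- Scaling property of BNGD under orthogonal conjugation and rescaling:
if `H' = μ • Q H Qᵀ`, `u' = (γ/√μ) • Q u`, `a'₀ = γ a₀`, `w'₀ = γ • Q w₀`,
then the BNGD iterates satisfy `a'_k = γ a_k` and `w'_k = γ • Q w_k` for all `k`. -/
theorem bngd_scaling_orthogonal
    {d : ℕ} (hd : 0 < d)
    (H : Matrix (Fin d) (Fin d) ℝ) (hH : H.PosDef)
    (u : Fin d → ℝ) (hu : u ≠ 0)
    (Q : Matrix (Fin d) (Fin d) ℝ) (hQ : Qᵀ * Q = 1)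
    (μ γ : ℝ) (hμ : 0 < μ) (hγ : 0 < γ)
    (εa ε : ℝ) (hεa : 0 < εa) (hε : 0 < ε)
    (g : Fin d → ℝ) (hg : g = H.mulVec u)
    (σ : (Fin d → ℝ) → ℝ) (hσ : ∀ v, σ v = Real.sqrt (v ⬝ᵥ H.mulVec v))
    -- the unprimed BNGD iterates
    (a : ℕ → ℝ) (w : ℕ → Fin d → ℝ) (hw0 : w 0 ≠ 0) (hwk : ∀ k, w k ≠ 0)
    (ha : ∀ k, a (k + 1) = a k + εa * ((w k ⬝ᵥ g) / σ (w k) - a k))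
    (hw : ∀ k, w (k + 1) = w k +
      (ε * (a k / σ (w k))) • (g - ((w k ⬝ᵥ g) / (σ (w k)) ^ 2) • H.mulVec (w k)))
    -- the primed configuration
    (H' : Matrix (Fin d) (Fin d) ℝ) (hH' : H' = μ • (Q * H * Qᵀ))
    (u' : Fin d → ℝ) (hu' : u' = (γ / Real.sqrt μ) • Q.mulVec u)
    (g' : Fin d → ℝ) (hg' : g' = H'.mulVec u')
    (σ' : (Fin d → ℝ) → ℝ) (hσ' : ∀ v, σ' v = Real.sqrt (v ⬝ᵥ H'.mulVec v))
    -- the primed BNGD iterates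
    (a' : ℕ → ℝ) (w' : ℕ → Fin d → ℝ)
    (ha'0 : a' 0 = γ * a 0) (hw'0 : w' 0 = γ • Q.mulVec (w 0))
    (ha' : ∀ k, a' (k + 1) = a' k + εa * ((w' k ⬝ᵥ g') / σ' (w' k) - a' k))
    (hw' : ∀ k, w' (k + 1) = w' k +
      (ε * (a' k / σ' (w' k))) • (g' - ((w' k ⬝ᵥ g') / (σ' (w' k)) ^ 2) • H'.mulVec (w' k))) :
    ∀ k, a' k = γ * a k ∧ w' k = γ • Q.mulVec (w k) := by
  have hQQ : Q * Qᵀ = 1 := mul_eq_one_comm.mp hQ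
  have hsqμ : (0:ℝ) < Real.sqrt μ := Real.sqrt_pos.mpr hμ
  -- orthogonal invariance of dot product
  have hdot : ∀ x y : Fin d → ℝ, Q.mulVec x ⬝ᵥ Q.mulVec y = x ⬝ᵥ y := by
    intro x y
    calc Q.mulVec x ⬝ᵥ Q.mulVec y = Matrix.vecMul x Qᵀ ⬝ᵥ Q.mulVec y := by
          rw [Matrix.vecMul_transpose]
      _ = x ⬝ᵥ Qᵀ.mulVec (Q.mulVec y) := (Matrix.dotProduct_mulVec _ _ _).symm
      _ = x ⬝ᵥ (Qᵀ * Q).mulVec y := by rw [Matrix.mulVec_mulVec]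
      _ = x ⬝ᵥ y := by rw [hQ, Matrix.one_mulVec]
  -- H' applied to Q-images
  have hH'v : ∀ v : Fin d → ℝ, H'.mulVec (Q.mulVec v) = μ • Q.mulVec (H.mulVec v) := by
    intro v
    rw [hH', Matrix.smul_mulVec, Matrix.mulVec_mulVec, Matrix.mul_assoc,
      Matrix.mul_assoc, hQ, Matrix.mul_one, ← Matrix.mulVec_mulVec]
  have hg'Q : g' = (γ * Real.sqrt μ) • Q.mulVec g := by
    rw [hg', hu', Matrix.mulVec_smul, hH'v, hg, smul_smul]
    congr 1
    rw [show γ / Real.sqrt μ * μ = γ * (μ / Real.sqrt μ) by ring, Real.div_sqrt]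
  -- σ' on γ • Q v
  have hσ'Q : ∀ v : Fin d → ℝ, σ' (γ • Q.mulVec v) = γ * Real.sqrt μ * σ v := by
    intro v
    rw [hσ' , hσ]
    rw [Matrix.mulVec_smul, hH'v]
    have : (γ • Q.mulVec v) ⬝ᵥ (γ • μ • Q.mulVec (H.mulVec v))
        = (γ * γ * μ) * (v ⬝ᵥ H.mulVec v) := by
      rw [smul_dotProduct, dotProduct_smul, dotProduct_smul, hdot]
      simp only [smul_eq_mul]
      ring
    rw [this]
    rw [Real.sqrt_mul (by positivity), Real.sqrt_mul (by positivity),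
      Real.sqrt_mul_self hγ.le]
  have hσpos : ∀ k, 0 < σ (w k) := by
    intro k
    rw [hσ]
    exact Real.sqrt_pos.mpr (by simpa using hH.dotProduct_mulVec_pos (hwk k))
  -- main induction
  intro k
  induction k with
  | zero => exact ⟨ha'0, hw'0⟩
  | succ k ih =>
    obtain ⟨iha, ihw⟩ := ih
    have h1 : σ (w k) ≠ 0 := (hσpos k).ne'
    have hratio : (w' k ⬝ᵥ g') / σ' (w' k) = γ * ((w k ⬝ᵥ g) / σ (w k)) := by
      rw [ihw, hg'Q, hσ'Q, smul_dotProduct, dotProduct_smul, hdot]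
      field_simp
      ring
    refine ⟨by rw [ha', ha k, iha, hratio]; ring, ?_⟩
    rw [hw', hw k, ihw, hg'Q, hσ'Q, iha, Matrix.mulVec_smul, hH'v,
      smul_dotProduct, dotProduct_smul, hdot]
    set s := Real.sqrt μ with hsdef
    have hs0 : s ≠ 0 := hsqμ.ne'
    have hss : s * s = μ := Real.mul_self_sqrt hμ.le
    rw [← hss]
    rw [Matrix.mulVec_add, Matrix.mulVec_smul, Matrix.mulVec_sub, Matrix.mulVec_smul]
    ext i
    simp only [Pi.add_apply, Pi.smul_apply, Pi.sub_apply, smul_eq_mul]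
    field_simp
end
end

section
/- Scaling property in the initial weight: Let r > 0. Let (a_k, w_k) be the BNGD iterates for the configuration (H, u, a₀, w₀, ε_a, ε), and let (a'_k, w'_k) be the BNGD iterates for the configuration (H, u, a₀, r·w₀, ε_a, r²·ε). Then for every k ≥ 0 one has a'_k = a_k and w'_k = r·w_k. -/
open Matrix Filter Topology

noncomputable section

/-- Scaling property of BNGD in the initial weight: the configuration
`(H, u, a₀, r·w₀, ε_a, r²·ε)` produces iterates `a'_k = a_k` and `w'_k = r • w_k`. -/
theorem bngd_scaling_initial_weight
    {d : ℕ} (hd : 0 < d)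
    (H : Matrix (Fin d) (Fin d) ℝ) (hH : H.PosDef)
    (u : Fin d → ℝ) (hu : u ≠ 0)
    (r : ℝ) (hr : 0 < r)
    (εa ε : ℝ) (hεa : 0 < εa) (hε : 0 < ε)
    (g : Fin d → ℝ) (hg : g = H.mulVec u)
    (σ : (Fin d → ℝ) → ℝ) (hσ : ∀ v, σ v = Real.sqrt (v ⬝ᵥ H.mulVec v))
    -- the BNGD iterates for step size ε
    (a : ℕ → ℝ) (w : ℕ → Fin d → ℝ) (hw0 : w 0 ≠ 0) (hwk : ∀ k, w k ≠ 0)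
    (ha : ∀ k, a (k + 1) = a k + εa * ((w k ⬝ᵥ g) / σ (w k) - a k))
    (hw : ∀ k, w (k + 1) = w k +
      (ε * (a k / σ (w k))) • (g - ((w k ⬝ᵥ g) / (σ (w k)) ^ 2) • H.mulVec (w k)))
    -- the BNGD iterates for initial weight r • w₀ and step size r² ε
    (a' : ℕ → ℝ) (w' : ℕ → Fin d → ℝ)
    (ha'0 : a' 0 = a 0) (hw'0 : w' 0 = r • w 0)
    (ha' : ∀ k, a' (k + 1) = a' k + εa * ((w' k ⬝ᵥ g) / σ (w' k) - a' k))
    (hw' : ∀ k, w' (k + 1) = w' k +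
      ((r ^ 2 * ε) * (a' k / σ (w' k))) •
        (g - ((w' k ⬝ᵥ g) / (σ (w' k)) ^ 2) • H.mulVec (w' k))) :
    ∀ k, a' k = a k ∧ w' k = r • w k := by
  -- σ is positive on the iterates
  have hσpos : ∀ k, 0 < σ (w k) := by
    intro k
    rw [hσ]
    apply Real.sqrt_pos.mpr
    have := hH.dotProduct_mulVec_pos (hwk k)
    simpa using this
  -- σ scales
  have hσscale : ∀ v : Fin d → ℝ, σ (r • v) = r * σ v := by
    intro v
    rw [hσ, hσ]
    have : (r • v) ⬝ᵥ H.mulVec (r • v) = r ^ 2 * (v ⬝ᵥ H.mulVec v) := by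
      rw [Matrix.mulVec_smul, smul_dotProduct, dotProduct_smul]
      simp [smul_eq_mul]; ring
    rw [this, Real.sqrt_mul (by positivity), Real.sqrt_sq hr.le]
  intro k
  induction k with
  | zero => exact ⟨ha'0, hw'0⟩
  | succ k ih =>
    obtain ⟨iha, ihw⟩ := ih
    have hσne : σ (w k) ≠ 0 := (hσpos k).ne'
    have hrne : r ≠ 0 := hr.ne'
    have hdot : w' k ⬝ᵥ g = r * (w k ⬝ᵥ g) := by
      rw [ihw, smul_dotProduct, smul_eq_mul]
    have hσ' : σ (w' k) = r * σ (w k) := by rw [ihw, hσscale]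
    have hfrac : (w' k ⬝ᵥ g) / σ (w' k) = (w k ⬝ᵥ g) / σ (w k) := by
      rw [hdot, hσ', mul_div_mul_left _ _ hrne]
    constructor
    · rw [ha' k, ha k, hfrac, iha]
    · rw [hw' k, hw k, ihw, iha, hσscale, smul_dotProduct, Matrix.mulVec_smul]
      funext i
      simp only [Pi.add_apply, Pi.smul_apply, Pi.sub_apply, smul_eq_mul]
      field_simp
end
end

section
/- Contraction bound for the BNGD residual: For every k with w_k ≠ 0 and w_{k+1} ≠ 0, the residuals e_k := u − (w_kᵀg/σ(w_k)²)w_k satisfy ‖e_{k+1}‖_H ≤ ‖u − (w_kᵀg/σ(w_k)²)w_{k+1}‖_H ≤ ρ(I − ε̂_k H)·‖e_k‖_H, where ε̂_k := ε(a_k/σ(w_k))(w_kᵀg/σ(w_k)²), ρ(I − t H) := max over all eigenvalues λ of H of |1 − t·λ|, and ‖x‖_H := √(xᵀHx). (The first inequality uses that t ↦ ‖u − t·w‖_H is minimized at t = wᵀHu/(wᵀHw), i.e., w ↦ (wᵀHu/wᵀHw)·w is the H-orthogonal projection of u onto the span of w.) -/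
open Matrix Filter Topology

noncomputable section

private lemma dotH_symm {d : ℕ} {H : Matrix (Fin d) (Fin d) ℝ} (hH : H.IsHermitian)
    (x y : Fin d → ℝ) : x ⬝ᵥ H *ᵥ y = y ⬝ᵥ H *ᵥ x := by
  rw [Matrix.dotProduct_mulVec, ← Matrix.mulVec_transpose, dotProduct_comm]
  congr 1
  have : Hᵀ = H := by rw [← Matrix.conjTranspose_eq_transpose_of_trivial]; exact hH
  rw [this]

private lemma dot_eq_inner {d : ℕ} (y z : EuclideanSpace ℝ (Fin d)) :
    (inner ℝ y z : ℝ) = ⇑y ⬝ᵥ ⇑z := by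
  rw [EuclideanSpace.inner_eq_star_dotProduct]; simp; exact dotProduct_comm _ _

private lemma quad_sum {d : ℕ} {H : Matrix (Fin d) (Fin d) ℝ} (hH : H.PosDef)
    (y : Fin d → ℝ) :
    y ⬝ᵥ H *ᵥ y = ∑ i, hH.1.eigenvalues i *
      (y ⬝ᵥ ⇑(hH.1.eigenvectorBasis i))^2 := by
  set b := hH.1.eigenvectorBasis with hb
  set Y : EuclideanSpace ℝ (Fin d) := WithLp.toLp 2 y with hY
  set Z : EuclideanSpace ℝ (Fin d) := WithLp.toLp 2 (H *ᵥ y) with hZ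
  have h2 := b.sum_inner_mul_inner Y Z
  have h1 : y ⬝ᵥ H *ᵥ y = (inner ℝ Y Z : ℝ) := by rw [dot_eq_inner]
  rw [h1, ← h2]
  refine Finset.sum_congr rfl fun i _ => ?_
  have hbi : (inner ℝ Y (b i) : ℝ) = y ⬝ᵥ ⇑(b i) := dot_eq_inner Y (b i)
  have hbz : (inner ℝ (b i) Z : ℝ) = hH.1.eigenvalues i * (y ⬝ᵥ ⇑(b i)) := by
    rw [dot_eq_inner]
    show ⇑(b i) ⬝ᵥ H *ᵥ y = _
    rw [dotH_symm hH.1, hH.1.mulVec_eigenvectorBasis i, dotProduct_smul, smul_eq_mul]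
  rw [hbi, hbz]; ring

private lemma spectral_bound {d : ℕ} (hd : 0 < d) {H : Matrix (Fin d) (Fin d) ℝ}
    (hH : H.PosDef) (t : ℝ) (x : Fin d → ℝ) :
    Real.sqrt ((x - t • H *ᵥ x) ⬝ᵥ H *ᵥ (x - t • H *ᵥ x)) ≤
      (⨆ i, |1 - t * hH.1.eigenvalues i|) * Real.sqrt (x ⬝ᵥ H *ᵥ x) := by
  haveI : Nonempty (Fin d) := ⟨⟨0, hd⟩⟩
  set ρ := ⨆ i, |1 - t * hH.1.eigenvalues i| with hρ
  have hbdd : BddAbove (Set.range fun i => |1 - t * hH.1.eigenvalues i|) :=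
    (Set.finite_range _).bddAbove
  have hρi : ∀ i, |1 - t * hH.1.eigenvalues i| ≤ ρ := fun i => le_ciSup hbdd i
  have hρ0 : 0 ≤ ρ := le_trans (abs_nonneg _) (hρi (Classical.arbitrary _))
  have key : (x - t • H *ᵥ x) ⬝ᵥ H *ᵥ (x - t • H *ᵥ x) ≤ ρ^2 * (x ⬝ᵥ H *ᵥ x) := by
    rw [quad_sum hH, quad_sum hH x, Finset.mul_sum]
    apply Finset.sum_le_sum; intro i _
    have hcoord : (x - t • H *ᵥ x) ⬝ᵥ ⇑(hH.1.eigenvectorBasis i) =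
        (1 - t * hH.1.eigenvalues i) * (x ⬝ᵥ ⇑(hH.1.eigenvectorBasis i)) := by
      rw [sub_dotProduct, smul_dotProduct,
        dotProduct_comm (H *ᵥ x) ⇑(hH.1.eigenvectorBasis i),
        dotH_symm hH.1 ⇑(hH.1.eigenvectorBasis i) x,
        hH.1.mulVec_eigenvectorBasis i, dotProduct_smul]
      simp only [smul_eq_mul]; ring
    rw [hcoord, mul_pow]
    have hl : 0 ≤ hH.1.eigenvalues i := (hH.eigenvalues_pos i).le
    have hsq : (1 - t * hH.1.eigenvalues i)^2 ≤ ρ^2 := by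
      rw [← sq_abs]; exact pow_le_pow_left₀ (abs_nonneg _) (hρi i) 2
    nlinarith [mul_le_mul_of_nonneg_right hsq
      (mul_nonneg hl (sq_nonneg (x ⬝ᵥ ⇑(hH.1.eigenvectorBasis i))))]
  calc Real.sqrt ((x - t • H *ᵥ x) ⬝ᵥ H *ᵥ (x - t • H *ᵥ x))
      ≤ Real.sqrt (ρ^2 * (x ⬝ᵥ H *ᵥ x)) := Real.sqrt_le_sqrt key
    _ = ρ * Real.sqrt (x ⬝ᵥ H *ᵥ x) := by
        rw [Real.sqrt_mul (sq_nonneg ρ), Real.sqrt_sq hρ0]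

private lemma proj_min {d : ℕ} {H : Matrix (Fin d) (Fin d) ℝ} (hH : H.PosDef)
    (u w : Fin d → ℝ) (hw : w ≠ 0) (c : ℝ) :
    (u - ((w ⬝ᵥ H *ᵥ u) / (w ⬝ᵥ H *ᵥ w)) • w) ⬝ᵥ
        H *ᵥ (u - ((w ⬝ᵥ H *ᵥ u) / (w ⬝ᵥ H *ᵥ w)) • w)
      ≤ (u - c • w) ⬝ᵥ H *ᵥ (u - c • w) := by
  have hP : 0 < w ⬝ᵥ H *ᵥ w := by simpa using hH.dotProduct_mulVec_pos hw
  have hsym : u ⬝ᵥ H *ᵥ w = w ⬝ᵥ H *ᵥ u := dotH_symm hH.1 u w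
  set q := (w ⬝ᵥ H *ᵥ u) / (w ⬝ᵥ H *ᵥ w) with hq
  have hα : w ⬝ᵥ H *ᵥ u = q * (w ⬝ᵥ H *ᵥ w) := by
    rw [hq]; field_simp
  simp only [Matrix.mulVec_sub, Matrix.mulVec_smul, sub_dotProduct, dotProduct_sub,
    smul_dotProduct, dotProduct_smul, smul_eq_mul]
  rw [hsym, hα]
  nlinarith [mul_nonneg hP.le (sq_nonneg (c - q))]

/-- Contraction bound for the BNGD residual:
`‖e_{k+1}‖_H ≤ ‖u − (w_kᵀg/σ(w_k)²)w_{k+1}‖_H ≤ ρ(I − ε̂_k H)·‖e_k‖_H`, where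
`ρ(I − tH)` is the maximum of `|1 − t·λ|` over the eigenvalues `λ` of `H`. -/
theorem bngd_residual_contraction
    {d : ℕ} (hd : 0 < d)
    (H : Matrix (Fin d) (Fin d) ℝ) (hH : H.PosDef)
    (u : Fin d → ℝ) (hu : u ≠ 0)
    (εa ε : ℝ) (hεa : 0 < εa) (hε : 0 < ε)
    (g : Fin d → ℝ) (hg : g = H.mulVec u)
    (σ : (Fin d → ℝ) → ℝ) (hσ : ∀ v, σ v = Real.sqrt (v ⬝ᵥ H.mulVec v))
    (normH : (Fin d → ℝ) → ℝ) (hnormH : ∀ x, normH x = Real.sqrt (x ⬝ᵥ H.mulVec x))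
    (a : ℕ → ℝ) (w : ℕ → Fin d → ℝ) (hw0 : w 0 ≠ 0)
    (ha : ∀ k, a (k + 1) = a k + εa * ((w k ⬝ᵥ g) / σ (w k) - a k))
    (hw : ∀ k, w (k + 1) = w k +
      (ε * (a k / σ (w k))) • (g - ((w k ⬝ᵥ g) / (σ (w k)) ^ 2) • H.mulVec (w k)))
    (e : ℕ → Fin d → ℝ)
    (he : ∀ k, e k = u - ((w k ⬝ᵥ g) / (σ (w k)) ^ 2) • w k) :
    ∀ k, w k ≠ 0 → w (k + 1) ≠ 0 →
      normH (e (k + 1)) ≤ normH (u - ((w k ⬝ᵥ g) / (σ (w k)) ^ 2) • w (k + 1)) ∧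
      normH (u - ((w k ⬝ᵥ g) / (σ (w k)) ^ 2) • w (k + 1)) ≤
        (⨆ i, |1 - (ε * (a k / σ (w k)) * ((w k ⬝ᵥ g) / (σ (w k)) ^ 2)) *
            hH.1.eigenvalues i|) * normH (e k) := by
  intro k hwk hwk1
  have hA : u - ((w k ⬝ᵥ g) / (σ (w k)) ^ 2) • w (k + 1) =
      e k - (ε * (a k / σ (w k)) * ((w k ⬝ᵥ g) / (σ (w k)) ^ 2)) • H *ᵥ (e k) := by
    rw [hw k, he k, hg, Matrix.mulVec_sub, Matrix.mulVec_smul]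
    module
  constructor
  · rw [hnormH, hnormH, he (k + 1)]
    apply Real.sqrt_le_sqrt
    have hσ2 : (σ (w (k + 1))) ^ 2 = w (k + 1) ⬝ᵥ H *ᵥ w (k + 1) := by
      rw [hσ]
      exact Real.sq_sqrt (by simpa using hH.posSemidef.dotProduct_mulVec_nonneg (w (k + 1)))
    rw [hg, hσ2]
    exact proj_min hH u (w (k + 1)) hwk1 ((w k ⬝ᵥ H *ᵥ u) / (σ (w k)) ^ 2)
  · rw [hnormH, hnormH, hA]
    exact spectral_bound hd hH _ (e k)
end
end

section
/- Exact norm growth of BNGD weights: For every k with w_k ≠ 0, the BNGD iterates satisfy ‖w_{k+1}‖² = ‖w_k‖² + ε²·(a_k/σ(w_k))²·‖H e_k‖², where e_k := u − (w_kᵀg/σ(w_k)²)w_k and ‖·‖ is the Euclidean norm. In particular the sequence ‖w_k‖ is nondecreasing. -/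
open Matrix Filter Topology

noncomputable section

/-- Exact norm growth of BNGD weights:
`‖w_{k+1}‖² = ‖w_k‖² + ε²·(a_k/σ(w_k))²·‖H e_k‖²`; in particular `‖w_k‖` is nondecreasing. -/
theorem bngd_norm_growth
    {d : ℕ} (hd : 0 < d)
    (H : Matrix (Fin d) (Fin d) ℝ) (hH : H.PosDef)
    (u : Fin d → ℝ) (hu : u ≠ 0)
    (εa ε : ℝ) (hεa : 0 < εa) (hε : 0 < ε)
    (g : Fin d → ℝ) (hg : g = H.mulVec u)
    (σ : (Fin d → ℝ) → ℝ) (hσ : ∀ v, σ v = Real.sqrt (v ⬝ᵥ H.mulVec v))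
    (a : ℕ → ℝ) (w : ℕ → Fin d → ℝ) (hw0 : w 0 ≠ 0)
    (ha : ∀ k, a (k + 1) = a k + εa * ((w k ⬝ᵥ g) / σ (w k) - a k))
    (hw : ∀ k, w (k + 1) = w k +
      (ε * (a k / σ (w k))) • (g - ((w k ⬝ᵥ g) / (σ (w k)) ^ 2) • H.mulVec (w k)))
    (e : ℕ → Fin d → ℝ)
    (he : ∀ k, e k = u - ((w k ⬝ᵥ g) / (σ (w k)) ^ 2) • w k) :
    (∀ k, w k ≠ 0 →
      w (k + 1) ⬝ᵥ w (k + 1) =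
        w k ⬝ᵥ w k + ε ^ 2 * (a k / σ (w k)) ^ 2 * (H.mulVec (e k) ⬝ᵥ H.mulVec (e k))) ∧
    Monotone fun k => Real.sqrt (w k ⬝ᵥ w k) := by

  have key : ∀ k, w k ≠ 0 →
      w (k + 1) ⬝ᵥ w (k + 1) =
        w k ⬝ᵥ w k + ε ^ 2 * (a k / σ (w k)) ^ 2 * (H.mulVec (e k) ⬝ᵥ H.mulVec (e k)) := by
    intro k hk
    set t := (w k ⬝ᵥ g) / (σ (w k)) ^ 2 with ht
    set c := ε * (a k / σ (w k)) with hc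
    have hpos : 0 < w k ⬝ᵥ H.mulVec (w k) := hH.dotProduct_mulVec_pos hk
    have hσ2 : (σ (w k)) ^ 2 = w k ⬝ᵥ H.mulVec (w k) := by
      rw [hσ, Real.sq_sqrt hpos.le]
    have hv : H.mulVec (e k) = g - t • H.mulVec (w k) := by
      rw [he, ht, hg]
      simp [Matrix.mulVec_sub, Matrix.mulVec_smul]
    have hcross : w k ⬝ᵥ (g - t • H.mulVec (w k)) = 0 := by
      rw [dotProduct_sub, dotProduct_smul, ht, hσ2, smul_eq_mul,
        div_mul_cancel₀ _ hpos.ne', sub_self]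
    have hwk1 : w (k + 1) = w k + c • (g - t • H.mulVec (w k)) := hw k
    rw [hwk1, hv]
    set v := g - t • H.mulVec (w k) with hvv
    rw [dotProduct_add, add_dotProduct, add_dotProduct, dotProduct_smul,
      smul_dotProduct, smul_dotProduct, dotProduct_comm v (w k), hcross,
      dotProduct_smul]
    simp only [smul_eq_mul]
    rw [hc]
    ring
  refine ⟨key, monotone_nat_of_le_succ ?_⟩
  intro k
  apply Real.sqrt_le_sqrt
  by_cases hk : w k = 0
  · have : w (k + 1) = w k := by
      rw [hw k, hk, hσ]
      simp
    rw [this]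
  · rw [key k hk]
    have h1 : 0 ≤ ε ^ 2 * (a k / σ (w k)) ^ 2 * (H.mulVec (e k) ⬝ᵥ H.mulVec (e k)) := by
      apply mul_nonneg (mul_nonneg (sq_nonneg _) (sq_nonneg _))
      exact Finset.sum_nonneg fun i _ => mul_self_nonneg _
    linarith
end
end

section
/- Convergence of BNGD under effective step size bounds: Let 0 < ε_a < 2. Suppose there exist positive numbers ε⁻ > 0 and ε̂⁺ < 2/λ_max such that the effective step size ε̂_k := ε(a_k/σ(w_k))(w_kᵀg/σ(w_k)²) satisfies ε⁻/‖w_k‖² ≤ ε̂_k ≤ ε̂⁺ for all k. Then the BNGD iterates (a_k, w_k) converge to a limit (a*, w*) where w* is a nonzero scalar multiple of u and a* = w*ᵀg/σ(w*) = ±√(uᵀHu); i.e., (a*, w*) is a global minimizer of the BN-OLS objective. -/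
open Matrix Filter Topology

noncomputable section

private lemma bngd_mulVec_dot_mulVec {d : ℕ} (M : Matrix (Fin d) (Fin d) ℝ) (x y : Fin d → ℝ) :
    (M *ᵥ x) ⬝ᵥ (M *ᵥ y) = x ⬝ᵥ ((Mᵀ * M) *ᵥ y) := by
  rw [← mulVec_mulVec, dotProduct_mulVec x Mᵀ, vecMul_transpose]

private lemma bngd_spec {d : ℕ} (H : Matrix (Fin d) (Fin d) ℝ) (hH : H.PosDef) (x : Fin d → ℝ) :
    ∃ y : Fin d → ℝ,
      (x ⬝ᵥ x = ∑ i, (y i)^2) ∧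
      (x ⬝ᵥ H *ᵥ x = ∑ i, hH.1.eigenvalues i * (y i)^2) ∧
      ((H *ᵥ x) ⬝ᵥ (H *ᵥ x) = ∑ i, (hH.1.eigenvalues i)^2 * (y i)^2) ∧
      (∀ t : ℝ, (x - t • (H *ᵥ x)) ⬝ᵥ H *ᵥ (x - t • (H *ᵥ x)) =
        ∑ i, hH.1.eigenvalues i * ((1 - t * hH.1.eigenvalues i) * y i)^2) := by
  set U : Matrix (Fin d) (Fin d) ℝ := ↑hH.1.eigenvectorUnitary with hUdef
  have hUmem := hH.1.eigenvectorUnitary.2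
  rw [Unitary.mem_iff] at hUmem
  have hsU : star U = Uᵀ := by
    rw [Matrix.star_eq_conjTranspose, conjTranspose_eq_transpose_of_trivial]
  have hUU : Uᵀ * U = 1 := by rw [← hsU]; exact hUmem.1
  have hUUt : U * Uᵀ = 1 := by rw [← hsU]; exact hUmem.2
  set D : Matrix (Fin d) (Fin d) ℝ := diagonal hH.1.eigenvalues with hDdef
  have hspec : H = U * D * Uᵀ := by
    have := hH.1.spectral_theorem
    rw [Unitary.conjStarAlgAut_apply] at this
    rw [← hsU]
    exact this
  set y : Fin d → ℝ := Uᵀ *ᵥ x with hydef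
  have hHx : H *ᵥ x = U *ᵥ (D *ᵥ y) := by
    rw [hspec, ← mulVec_mulVec, ← mulVec_mulVec]
  have hdotU : ∀ z₁ z₂ : Fin d → ℝ, (U *ᵥ z₁) ⬝ᵥ (U *ᵥ z₂) = z₁ ⬝ᵥ z₂ := by
    intro z₁ z₂; rw [bngd_mulVec_dot_mulVec, hUU, one_mulVec]
  have hdotUt : ∀ z₁ z₂ : Fin d → ℝ, (Uᵀ *ᵥ z₁) ⬝ᵥ (Uᵀ *ᵥ z₂) = z₁ ⬝ᵥ z₂ := by
    intro z₁ z₂; rw [bngd_mulVec_dot_mulVec, transpose_transpose, hUUt, one_mulVec]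
  have key : ∀ z : Fin d → ℝ, z ⬝ᵥ H *ᵥ z = (Uᵀ *ᵥ z) ⬝ᵥ (D *ᵥ (Uᵀ *ᵥ z)) := by
    intro z
    conv_lhs => rw [hspec]
    rw [← mulVec_mulVec, ← mulVec_mulVec, dotProduct_mulVec, ← mulVec_transpose]
  refine ⟨y, ?_, ?_, ?_, ?_⟩
  · rw [← hdotUt x x]
    simp only [dotProduct, ← hydef, sq]
  · rw [key x, ← hydef]
    simp only [dotProduct, hDdef, mulVec_diagonal]
    exact Finset.sum_congr rfl fun i _ => by ring
  · rw [hHx, hdotU]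
    simp only [dotProduct, hDdef, mulVec_diagonal]
    exact Finset.sum_congr rfl fun i _ => by ring
  · intro t
    rw [key]
    have hy' : Uᵀ *ᵥ (x - t • (H *ᵥ x)) = y - t • (D *ᵥ y) := by
      rw [mulVec_sub, mulVec_smul, hHx, mulVec_mulVec, hUU, one_mulVec, hydef]
    rw [hy']
    simp only [dotProduct, hDdef, mulVec_diagonal, Pi.sub_apply, Pi.smul_apply, smul_eq_mul]
    exact Finset.sum_congr rfl fun i _ => by ring

private lemma bngd_C1 {d : ℕ} (H : Matrix (Fin d) (Fin d) ℝ) (hH : H.PosDef) (lmin : ℝ)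
    (hlmin : ∀ i, lmin ≤ hH.1.eigenvalues i) (x : Fin d → ℝ) :
    lmin * (x ⬝ᵥ x) ≤ x ⬝ᵥ H *ᵥ x := by
  obtain ⟨y, h1, h2, -, -⟩ := bngd_spec H hH x
  rw [h1, h2, Finset.mul_sum]
  exact Finset.sum_le_sum fun i _ =>
    mul_le_mul_of_nonneg_right (hlmin i) (sq_nonneg _)

private lemma bngd_C2 {d : ℕ} (H : Matrix (Fin d) (Fin d) ℝ) (hH : H.PosDef) (lmax : ℝ)
    (hlmax : ∀ i, hH.1.eigenvalues i ≤ lmax) (x : Fin d → ℝ) :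
    (H *ᵥ x) ⬝ᵥ (H *ᵥ x) ≤ lmax * (x ⬝ᵥ H *ᵥ x) := by
  obtain ⟨y, -, h2, h3, -⟩ := bngd_spec H hH x
  rw [h2, h3, Finset.mul_sum]
  refine Finset.sum_le_sum fun i _ => ?_
  have hpos := (hH.eigenvalues_pos i).le
  calc (hH.1.eigenvalues i)^2 * (y i)^2
      = (hH.1.eigenvalues i * (hH.1.eigenvalues i * (y i)^2)) := by ring
    _ ≤ lmax * (hH.1.eigenvalues i * (y i)^2) :=
        mul_le_mul_of_nonneg_right (hlmax i) (by positivity)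

private lemma bngd_C3 {d : ℕ} (H : Matrix (Fin d) (Fin d) ℝ) (hH : H.PosDef) (t μ : ℝ)
    (hμ : ∀ i, |1 - t * hH.1.eigenvalues i| ≤ μ) (x : Fin d → ℝ) :
    (x - t • (H *ᵥ x)) ⬝ᵥ H *ᵥ (x - t • (H *ᵥ x)) ≤ μ^2 * (x ⬝ᵥ H *ᵥ x) := by
  obtain ⟨y, -, h2, -, h4⟩ := bngd_spec H hH x
  rw [h2, h4 t, Finset.mul_sum]
  refine Finset.sum_le_sum fun i _ => ?_
  have hpos := (hH.eigenvalues_pos i).le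
  have hsq : (1 - t * hH.1.eigenvalues i)^2 ≤ μ^2 := by
    have := abs_le.mp (hμ i)
    exact sq_le_sq' this.1 this.2
  calc hH.1.eigenvalues i * ((1 - t * hH.1.eigenvalues i) * y i)^2
      = (1 - t * hH.1.eigenvalues i)^2 * (hH.1.eigenvalues i * (y i)^2) := by ring
    _ ≤ μ^2 * (hH.1.eigenvalues i * (y i)^2) :=
        mul_le_mul_of_nonneg_right hsq (by positivity)

private lemma bngd_dot_symm {d : ℕ} (H : Matrix (Fin d) (Fin d) ℝ) (hsym : Hᵀ = H)
    (x y : Fin d → ℝ) : x ⬝ᵥ H *ᵥ y = y ⬝ᵥ H *ᵥ x := by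
  rw [dotProduct_mulVec, ← mulVec_transpose, hsym, dotProduct_comm]

private lemma bngd_expand {d : ℕ} (H : Matrix (Fin d) (Fin d) ℝ) (hsym : Hᵀ = H)
    (x y : Fin d → ℝ) (c : ℝ) :
    (x - c • y) ⬝ᵥ H *ᵥ (x - c • y) =
      x ⬝ᵥ H *ᵥ x - 2*c*(x ⬝ᵥ H *ᵥ y) + c^2*(y ⬝ᵥ H *ᵥ y) := by
  have hyx : y ⬝ᵥ H *ᵥ x = x ⬝ᵥ H *ᵥ y := bngd_dot_symm H hsym y x
  rw [mulVec_sub, mulVec_smul, sub_dotProduct, smul_dotProduct,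
    dotProduct_sub, dotProduct_sub, dotProduct_smul, dotProduct_smul, hyx]
  simp only [smul_eq_mul]
  ring

private lemma bngd_dot_self_nonneg {d : ℕ} (v : Fin d → ℝ) : 0 ≤ v ⬝ᵥ v := by
  simp only [dotProduct]
  exact Finset.sum_nonneg fun i _ => mul_self_nonneg _

private lemma bngd_dot_self_pos {d : ℕ} (v : Fin d → ℝ) (hv : v ≠ 0) : 0 < v ⬝ᵥ v := by
  rcases (bngd_dot_self_nonneg v).lt_or_eq with h | h
  · exact h
  · exact absurd ((dotProduct_self_eq_zero).mp h.symm) hv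

private lemma bngd_tendsto_recur (c : ℝ) (hc : |c| < 1) (A B : ℕ → ℝ) (l : ℝ)
    (hrec : ∀ k, A (k + 1) = c * A k + B k)
    (hB : Tendsto B atTop (nhds ((1 - c) * l))) :
    Tendsto A atTop (nhds l) := by
  rw [Metric.tendsto_atTop] at hB ⊢
  intro δ hδ
  have hc0 : 0 ≤ |c| := abs_nonneg c
  have h1c : 0 < 1 - |c| := by linarith
  obtain ⟨K, hK⟩ := hB ((1 - |c|) * (δ/4)) (by positivity)
  have claim : ∀ m : ℕ, |A (K + m) - l| ≤ |c|^m * |A K - l| + δ/4 := by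
    intro m
    induction m with
    | zero => simp; linarith [abs_nonneg (A K - l), hδ]
    | succ m ih =>
      have hBm : |B (K + m) - (1 - c) * l| ≤ (1 - |c|) * (δ/4) := by
        have := hK (K + m) (Nat.le_add_right _ _)
        rw [Real.dist_eq] at this
        exact this.le
      have he : A (K + m + 1) - l = c * (A (K + m) - l) + (B (K + m) - (1 - c) * l) := by
        rw [hrec]; ring
      calc |A (K + (m+1)) - l| = |c * (A (K + m) - l) + (B (K + m) - (1 - c) * l)| := by
            rw [show K + (m+1) = K + m + 1 from rfl, he]
        _ ≤ |c * (A (K + m) - l)| + |B (K + m) - (1 - c) * l| := abs_add_le _ _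
        _ ≤ |c| * |A (K + m) - l| + |B (K + m) - (1 - c) * l| := by rw [abs_mul]
        _ ≤ |c| * (|c|^m * |A K - l| + δ/4) + (1 - |c|) * (δ/4) := by gcongr
        _ = |c|^(m+1) * |A K - l| + δ/4 := by ring
  have hpow : Tendsto (fun m : ℕ => |c|^m * |A K - l|) atTop (nhds 0) := by
    simpa using (tendsto_pow_atTop_nhds_zero_of_lt_one hc0 hc).mul_const |A K - l|
  rw [Metric.tendsto_atTop] at hpow
  obtain ⟨M, hM⟩ := hpow (δ/4) (by positivity)
  refine ⟨K + M, fun k hk => ?_⟩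
  have hkK : K ≤ k := le_trans (Nat.le_add_right _ _) hk
  obtain ⟨m, rfl⟩ := Nat.exists_eq_add_of_le hkK
  have hmM : M ≤ m := by omega
  have h2 := hM m hmM
  rw [Real.dist_eq, sub_zero] at h2
  have h2' : |c|^m * |A K - l| < δ/4 := lt_of_abs_lt h2
  have := claim m
  rw [Real.dist_eq]
  linarith

set_option maxHeartbeats 1000000 in
/-- Convergence of BNGD under effective step size bounds: if `0 < ε_a < 2` and
`ε⁻/‖w_k‖² ≤ ε̂_k ≤ ε̂⁺ < 2/λ_max` for all `k`, then `(a_k, w_k)` converges to a global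
minimizer `(a*, w*)` of the BN-OLS objective: `w*` is a nonzero multiple of `u`,
`a* = w*ᵀg/σ(w*)` and `a*² = uᵀHu`. -/
theorem bngd_convergence_under_stepsize_bounds
    {d : ℕ} (hd : 0 < d)
    (H : Matrix (Fin d) (Fin d) ℝ) (hH : H.PosDef)
    (u : Fin d → ℝ) (hu : u ≠ 0)
    (εa ε : ℝ) (hεa : 0 < εa) (hεa2 : εa < 2) (hε : 0 < ε)
    (g : Fin d → ℝ) (hg : g = H.mulVec u)
    (σ : (Fin d → ℝ) → ℝ) (hσ : ∀ v, σ v = Real.sqrt (v ⬝ᵥ H.mulVec v))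
    (a : ℕ → ℝ) (w : ℕ → Fin d → ℝ) (hw0 : w 0 ≠ 0) (hwk : ∀ k, w k ≠ 0)
    (ha : ∀ k, a (k + 1) = a k + εa * ((w k ⬝ᵥ g) / σ (w k) - a k))
    (hw : ∀ k, w (k + 1) = w k +
      (ε * (a k / σ (w k))) • (g - ((w k ⬝ᵥ g) / (σ (w k)) ^ 2) • H.mulVec (w k)))
    (εhat : ℕ → ℝ)
    (hεhat : ∀ k, εhat k = ε * (a k / σ (w k)) * ((w k ⬝ᵥ g) / (σ (w k)) ^ 2))
    (εm εhp : ℝ) (hεm : 0 < εm) (hεhp : 0 < εhp)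
    (hεhpmax : εhp < 2 / (⨆ i, hH.1.eigenvalues i))
    (hbounds : ∀ k, εm / (w k ⬝ᵥ w k) ≤ εhat k ∧ εhat k ≤ εhp) :
    ∃ (astar : ℝ) (wstar : Fin d → ℝ) (c : ℝ), c ≠ 0 ∧ wstar = c • u ∧
      astar = (wstar ⬝ᵥ g) / σ wstar ∧ astar ^ 2 = u ⬝ᵥ H.mulVec u ∧
      Tendsto a atTop (nhds astar) ∧ Tendsto w atTop (nhds wstar) := by
  subst hg
  haveI : Nonempty (Fin d) := Fin.pos_iff_nonempty.mp hd
  have hsym : Hᵀ = H := by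
    have h := hH.1
    rwa [Matrix.IsHermitian, conjTranspose_eq_transpose_of_trivial] at h
  have hQpos : ∀ v : Fin d → ℝ, v ≠ 0 → 0 < v ⬝ᵥ H *ᵥ v := fun v hv => by
    simpa using hH.dotProduct_mulVec_pos hv
  have hQnn : ∀ v : Fin d → ℝ, 0 ≤ v ⬝ᵥ H *ᵥ v := fun v => by
    simpa using hH.posSemidef.dotProduct_mulVec_nonneg v
  -- eigenvalue bounds
  obtain ⟨i0, hi0⟩ := Finite.exists_min hH.1.eigenvalues
  obtain ⟨lmin, hlmindef⟩ : ∃ x : ℝ, x = hH.1.eigenvalues i0 := ⟨_, rfl⟩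
  have hlmin : ∀ i, lmin ≤ hH.1.eigenvalues i := by
    intro i; rw [hlmindef]; exact hi0 i
  have hlminpos : 0 < lmin := by rw [hlmindef]; exact hH.eigenvalues_pos i0
  obtain ⟨lmax, hlmaxdef⟩ : ∃ x : ℝ, x = ⨆ i, hH.1.eigenvalues i := ⟨_, rfl⟩
  have hlmax : ∀ i, hH.1.eigenvalues i ≤ lmax := by
    intro i; rw [hlmaxdef]
    exact le_ciSup (Set.Finite.bddAbove (Set.finite_range _)) i
  have hlmaxpos : 0 < lmax := lt_of_lt_of_le (hlmindef ▸ hlminpos) (hlmax i0)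
  have hβ2 : εhp * lmax < 2 := by
    rw [hlmaxdef, ← lt_div_iff₀ (hlmaxdef ▸ hlmaxpos)]
    exact hεhpmax
  -- basic quantities
  have hσk : ∀ k, σ (w k) = Real.sqrt (w k ⬝ᵥ H *ᵥ w k) := fun k => hσ (w k)
  have hQw : ∀ k, 0 < w k ⬝ᵥ H *ᵥ w k := fun k => hQpos _ (hwk k)
  have hσpos : ∀ k, 0 < σ (w k) := fun k => by
    rw [hσk k]; exact Real.sqrt_pos.mpr (hQw k)
  have hσsq : ∀ k, σ (w k) ^ 2 = w k ⬝ᵥ H *ᵥ w k := fun k => by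
    rw [hσk k]; exact Real.sq_sqrt (hQw k).le
  obtain ⟨Qu, hQudef⟩ : ∃ x : ℝ, x = u ⬝ᵥ H *ᵥ u := ⟨_, rfl⟩
  have hQupos : 0 < Qu := by rw [hQudef]; exact hQpos u hu
  obtain ⟨s, hsdef⟩ : ∃ s : ℕ → ℝ, s = fun k => (w k ⬝ᵥ H *ᵥ u) / (w k ⬝ᵥ H *ᵥ w k) :=
    ⟨_, rfl⟩
  obtain ⟨r, hrdef⟩ : ∃ r : ℕ → Fin d → ℝ, r = fun k => u - s k • w k := ⟨_, rfl⟩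
  obtain ⟨L, hLdef⟩ : ∃ L : ℕ → ℝ,
      L = fun k => Qu - (w k ⬝ᵥ H *ᵥ u)^2 / (w k ⬝ᵥ H *ᵥ w k) := ⟨_, rfl⟩
  obtain ⟨n, hndef⟩ : ∃ n : ℕ → ℝ, n = fun k => w k ⬝ᵥ w k := ⟨_, rfl⟩
  have hnpos : ∀ k, 0 < n k := by
    intro k
    simp only [hndef]
    exact bngd_dot_self_pos _ (hwk k)
  have hQr : ∀ k, (r k) ⬝ᵥ H *ᵥ (r k) = L k := by
    intro k
    simp only [hrdef, hLdef, hsdef, hQudef]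
    rw [bngd_expand H hsym u (w k) _, bngd_dot_symm H hsym u (w k)]
    field_simp [(hQw k).ne']
    ring
  have hLnn : ∀ k, 0 ≤ L k := fun k => (hQr k) ▸ hQnn (r k)
  have hLleQu : ∀ k, (w k ⬝ᵥ H *ᵥ u)^2 / (w k ⬝ᵥ H *ᵥ w k) ≤ Qu := by
    intro k
    have h := hLnn k
    simp only [hLdef] at h
    linarith
  have hortho : ∀ k, w k ⬝ᵥ H *ᵥ r k = 0 := by
    intro k
    simp only [hrdef, hsdef]
    rw [mulVec_sub, mulVec_smul, dotProduct_sub, dotProduct_smul, smul_eq_mul]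
    field_simp [(hQw k).ne']
    ring
  have hstep : ∀ k, w (k + 1) = w k + (ε * (a k / σ (w k))) • (H *ᵥ r k) := by
    intro k
    have hvec : H.mulVec u - ((w k ⬝ᵥ H.mulVec u) / (σ (w k))^2) • H.mulVec (w k)
        = H *ᵥ r k := by
      simp only [hrdef, hsdef, mulVec_sub, mulVec_smul, hσsq k]
    rw [hw k, hvec]
  have hninc : ∀ k, n (k + 1) = n k + (ε * (a k / σ (w k)))^2 * ((H *ᵥ r k) ⬝ᵥ (H *ᵥ r k)) := by
    intro k
    have h1 : w k ⬝ᵥ (H *ᵥ r k) = 0 := hortho k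
    have h2 : (H *ᵥ r k) ⬝ᵥ w k = 0 := by rw [dotProduct_comm]; exact h1
    simp only [hndef]
    rw [hstep k]
    simp only [dotProduct_add, add_dotProduct, dotProduct_smul, smul_dotProduct,
      smul_eq_mul, h1, h2]
    ring
  have hnmono : Monotone n := by
    apply monotone_nat_of_le_succ
    intro k
    rw [hninc k]
    nlinarith [bngd_dot_self_nonneg (H *ᵥ r k), sq_nonneg (ε * (a k / σ (w k)))]
  -- bound on |a k|
  obtain ⟨G, hGdef⟩ : ∃ x : ℝ, x = Real.sqrt Qu := ⟨_, rfl⟩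
  have hGpos : 0 < G := by rw [hGdef]; exact Real.sqrt_pos.mpr hQupos
  have hb : ∀ k, |(w k ⬝ᵥ H *ᵥ u) / σ (w k)| ≤ G := by
    intro k
    have h1 : ((w k ⬝ᵥ H *ᵥ u) / σ (w k))^2 ≤ Qu := by
      rw [div_pow, hσsq k]; exact hLleQu k
    calc |(w k ⬝ᵥ H *ᵥ u) / σ (w k)|
        = Real.sqrt (((w k ⬝ᵥ H *ᵥ u) / σ (w k))^2) := (Real.sqrt_sq_eq_abs _).symm
      _ ≤ Real.sqrt Qu := Real.sqrt_le_sqrt h1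
      _ = G := hGdef.symm
  obtain ⟨m0, hm0def⟩ : ∃ x : ℝ, x = min εa (2 - εa) := ⟨_, rfl⟩
  have hm0pos : 0 < m0 := by
    rw [hm0def, lt_min_iff]
    constructor <;> linarith
  have hm0le1 : m0 ≤ 1 := by
    rw [hm0def]
    rcases le_total εa 1 with h | h
    · exact le_trans (min_le_left _ _) h
    · exact le_trans (min_le_right _ _) (by linarith)
  have habs : |1 - εa| = 1 - m0 := by
    rw [hm0def]
    rcases le_total εa 1 with h | h
    · rw [abs_of_nonneg (by linarith), min_eq_left (by linarith)]
    · rw [abs_of_nonpos (by linarith), min_eq_right (by linarith)]; ring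
  obtain ⟨A, hAdef⟩ : ∃ x : ℝ, x = max |a 0| (εa * G / m0) := ⟨_, rfl⟩
  have hApos : 0 < A := by
    rw [hAdef]
    exact lt_of_lt_of_le (div_pos (mul_pos hεa hGpos) hm0pos) (le_max_right _ _)
  have hA2 : εa * G ≤ m0 * A := by
    have h1 : εa * G / m0 ≤ A := by rw [hAdef]; exact le_max_right _ _
    calc εa * G = m0 * (εa * G / m0) := by field_simp
      _ ≤ m0 * A := mul_le_mul_of_nonneg_left h1 hm0pos.le
  have hAbound : ∀ k, |a k| ≤ A := by
    intro k
    induction k with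
    | zero => rw [hAdef]; exact le_max_left _ _
    | succ k ih =>
      have harec : a (k + 1) = (1 - εa) * a k + εa * ((w k ⬝ᵥ H *ᵥ u) / σ (w k)) := by
        rw [ha k]; ring
      calc |a (k + 1)| = |(1 - εa) * a k + εa * ((w k ⬝ᵥ H *ᵥ u) / σ (w k))| := by rw [harec]
        _ ≤ |(1 - εa) * a k| + |εa * ((w k ⬝ᵥ H *ᵥ u) / σ (w k))| := abs_add_le _ _
        _ = |1 - εa| * |a k| + εa * |(w k ⬝ᵥ H *ᵥ u) / σ (w k)| := by
            rw [abs_mul, abs_mul, abs_of_nonneg hεa.le]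
        _ ≤ (1 - m0) * A + εa * G := by
            rw [habs]
            have h1 : (0:ℝ) ≤ 1 - m0 := by linarith
            have h2 := hb k
            have h3 := abs_nonneg (a k)
            nlinarith
        _ ≤ A := by linarith
  -- effective step positivity
  have hnb : ∀ k, εm / n k ≤ εhat k := by
    intro k
    simp only [hndef]
    exact (hbounds k).1
  have hεhatpos : ∀ k, 0 < εhat k := fun k =>
    lt_of_lt_of_le (div_pos hεm (hnpos k)) (hnb k)
  -- contraction
  have hcontr : ∀ k (μ : ℝ), 1 - εhat k * lmin ≤ μ → εhp * lmax - 1 ≤ μ →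
      L (k + 1) ≤ μ^2 * L k := by
    intro k μ hμ1 hμ2
    have hQv := hQw (k + 1)
    have hls : L (k + 1) ≤ (u - s k • w (k + 1)) ⬝ᵥ H *ᵥ (u - s k • w (k + 1)) := by
      rw [bngd_expand H hsym u (w (k + 1)) (s k), bngd_dot_symm H hsym u (w (k + 1))]
      have heq : (u ⬝ᵥ H *ᵥ u) - 2 * s k * (w (k+1) ⬝ᵥ H *ᵥ u)
          + (s k)^2 * (w (k+1) ⬝ᵥ H *ᵥ w (k+1)) - L (k + 1)
          = (s k * (w (k+1) ⬝ᵥ H *ᵥ w (k+1)) - (w (k+1) ⬝ᵥ H *ᵥ u))^2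
            / (w (k+1) ⬝ᵥ H *ᵥ w (k+1)) := by
        simp only [hLdef, hQudef]
        field_simp [(hQw (k+1)).ne']
        ring
      have hge : 0 ≤ (s k * (w (k+1) ⬝ᵥ H *ᵥ w (k+1)) - (w (k+1) ⬝ᵥ H *ᵥ u))^2
            / (w (k+1) ⬝ᵥ H *ᵥ w (k+1)) := div_nonneg (sq_nonneg _) hQv.le
      linarith
    have hca : εhat k = s k * (ε * (a k / σ (w k))) := by
      rw [hεhat k, hσsq k]
      simp only [hsdef]
      ring
    have hvec2 : u - s k • w (k + 1) = r k - εhat k • (H *ᵥ r k) := by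
      rw [hstep k, hca]
      simp only [hrdef]
      funext i
      simp only [Pi.sub_apply, Pi.add_apply, Pi.smul_apply, smul_eq_mul]
      ring
    have hμall : ∀ i, |1 - εhat k * hH.1.eigenvalues i| ≤ μ := by
      intro i
      rw [abs_le]
      constructor
      · have h1 : εhat k * hH.1.eigenvalues i ≤ εhp * lmax :=
          mul_le_mul (hbounds k).2 (hlmax i) (hH.eigenvalues_pos i).le hεhp.le
        linarith
      · have h2 : εhat k * lmin ≤ εhat k * hH.1.eigenvalues i :=
          mul_le_mul_of_nonneg_left (hlmin i) (hεhatpos k).le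
        linarith
    calc L (k + 1) ≤ (u - s k • w (k + 1)) ⬝ᵥ H *ᵥ (u - s k • w (k + 1)) := hls
      _ = (r k - εhat k • (H *ᵥ r k)) ⬝ᵥ H *ᵥ (r k - εhat k • (H *ᵥ r k)) := by rw [hvec2]
      _ ≤ μ^2 * ((r k) ⬝ᵥ H *ᵥ (r k)) := bngd_C3 H hH (εhat k) μ hμall (r k)
      _ = μ^2 * L k := by rw [hQr k]
  -- increment bound
  obtain ⟨C2, hC2def⟩ : ∃ x : ℝ, x = ε^2 * A^2 * lmax / lmin := ⟨_, rfl⟩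
  have hC2nn : 0 ≤ C2 := by
    rw [hC2def]
    exact div_nonneg (mul_nonneg (mul_nonneg (sq_nonneg ε) (sq_nonneg A)) hlmaxpos.le)
      hlminpos.le
  have hE4 : ∀ k, n (k + 1) ≤ n k + C2 * L k / n k := by
    intro k
    rw [hninc k]
    have h1 : (H *ᵥ r k) ⬝ᵥ (H *ᵥ r k) ≤ lmax * L k := by
      rw [← hQr k]; exact bngd_C2 H hH lmax hlmax (r k)
    have hσ2 : lmin * n k ≤ σ (w k)^2 := by
      rw [hσsq k]
      have := bngd_C1 H hH lmin hlmin (w k)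
      simp only [hndef]
      exact this
    have h2 : (ε * (a k / σ (w k)))^2 ≤ ε^2 * A^2 / (lmin * n k) := by
      have he : (ε * (a k / σ (w k)))^2 = ε^2 * (a k)^2 / σ (w k)^2 := by
        rw [mul_pow, div_pow]
        ring
      rw [he]
      apply div_le_div₀ (mul_nonneg (sq_nonneg ε) (sq_nonneg A)) ?_
        (mul_pos hlminpos (hnpos k)) hσ2
      have h3 := hAbound k
      have h4 : (a k)^2 ≤ A^2 := sq_le_sq' (neg_le_of_abs_le h3) (le_of_abs_le h3)
      exact mul_le_mul_of_nonneg_left h4 (sq_nonneg ε)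
    have h4 : (ε * (a k / σ (w k)))^2 * ((H *ᵥ r k) ⬝ᵥ (H *ᵥ r k))
        ≤ (ε^2 * A^2 / (lmin * n k)) * (lmax * L k) := by
      apply mul_le_mul h2 h1 (bngd_dot_self_nonneg _)
        (div_nonneg (mul_nonneg (sq_nonneg ε) (sq_nonneg A))
          (mul_pos hlminpos (hnpos k)).le)
    have h5 : (ε^2 * A^2 / (lmin * n k)) * (lmax * L k) = C2 * L k / n k := by
      rw [hC2def]
      field_simp [(hnpos k).ne', hlminpos.ne']
    linarith [h4, h5 ▸ h4]
  -- boundedness of n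
  obtain ⟨c1, hc1def⟩ : ∃ x : ℝ, x = εm * lmin := ⟨_, rfl⟩
  have hc1pos : 0 < c1 := by rw [hc1def]; exact mul_pos hεm hlminpos
  obtain ⟨β', hβ'def⟩ : ∃ x : ℝ, x = max (εhp * lmax - 1) 0 := ⟨_, rfl⟩
  have hβ'lt : β' < 1 := by
    rw [hβ'def, max_lt_iff]
    constructor <;> linarith
  have hβ'nn : 0 ≤ β' := by rw [hβ'def]; exact le_max_right _ _
  have hβ'ge : εhp * lmax - 1 ≤ β' := by rw [hβ'def]; exact le_max_left _ _
  -- per-step decay when n is large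
  have hdecay : ∀ k, c1 / (1 - β') < n k → c1 / n k * L k ≤ L k - L (k + 1) := by
    intro k hnk
    have hnkpos := hnpos k
    have h1β : (0:ℝ) < 1 - β' := by linarith
    have hfrac : c1 / n k < 1 - β' := by
      rw [div_lt_iff₀ hnkpos]
      rw [div_lt_iff₀ h1β] at hnk
      nlinarith
    have hfracpos : 0 < c1 / n k := div_pos hc1pos hnkpos
    have hμ1 : 1 - εhat k * lmin ≤ 1 - c1 / n k := by
      have h2 : c1 / n k ≤ εhat k * lmin := by
        have h3 : c1 / n k = (εm / n k) * lmin := by rw [hc1def]; ring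
        rw [h3]
        exact mul_le_mul_of_nonneg_right (hnb k) hlminpos.le
      linarith
    have hμ2 : εhp * lmax - 1 ≤ 1 - c1 / n k := by linarith
    have hcon := hcontr k (1 - c1 / n k) hμ1 hμ2
    have hsq : (1 - c1 / n k)^2 ≤ 1 - c1 / n k := by nlinarith
    have hL := hLnn k
    nlinarith
  have hMex : ∃ M : ℝ, 0 < M ∧ ∀ k, n k ≤ M := by
    by_cases hcase : ∀ k, n k ≤ max (c1 / (1 - β')) (n 0)
    · exact ⟨max (c1 / (1 - β')) (n 0),
        lt_of_lt_of_le (hnpos 0) (le_max_right _ _), hcase⟩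
    · push_neg at hcase
      obtain ⟨K, hK⟩ := hcase
      have hKn : ∀ k, K ≤ k → c1 / (1 - β') < n k := by
        intro k hk
        exact lt_of_lt_of_le (lt_of_le_of_lt (le_max_left _ _) hK) (hnmono hk)
      have hclaim : ∀ m, K ≤ m → n m ≤ n K + (C2 / c1) * (L K - L m) := by
        intro m hm
        induction m, hm using Nat.le_induction with
        | base => simp
        | succ m hm ih =>
          have h1 := hE4 m
          have h2 := hdecay m (hKn m hm)
          have h3 : C2 * L m / n m ≤ (C2 / c1) * (L m - L (m + 1)) := by
            have h4 : C2 * L m / n m = (C2 / c1) * (c1 / n m * L m) := by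
              field_simp [hc1pos.ne', (hnpos m).ne']
            rw [h4]
            exact mul_le_mul_of_nonneg_left h2 (div_nonneg hC2nn hc1pos.le)
          linarith
      refine ⟨n K + (C2 / c1) * L K, ?_, fun k => ?_⟩
      · have := hnpos K
        have := mul_nonneg (div_nonneg hC2nn hc1pos.le) (hLnn K)
        linarith
      · rcases le_or_gt K k with h | h
        · have h1 := hclaim k h
          have h2 : (C2 / c1) * (L K - L k) ≤ (C2 / c1) * L K := by
            apply mul_le_mul_of_nonneg_left _ (div_nonneg hC2nn hc1pos.le)
            linarith [hLnn k]
          linarith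
        · have h1 : n k ≤ n K := hnmono h.le
          have h2 := mul_nonneg (div_nonneg hC2nn hc1pos.le) (hLnn K)
          linarith
  obtain ⟨M, hMpos, hM⟩ := hMex
  -- uniform geometric contraction
  obtain ⟨ρ, hρdef⟩ : ∃ x : ℝ, x = max (1 - c1 / M) β' := ⟨_, rfl⟩
  have hρlt : ρ < 1 := by
    rw [hρdef, max_lt_iff]
    constructor
    · have : 0 < c1 / M := div_pos hc1pos hMpos
      linarith
    · exact hβ'lt
  have hρnn : 0 ≤ ρ := by
    rw [hρdef]
    exact le_trans hβ'nn (le_max_right _ _)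
  have hLcontr : ∀ k, L (k + 1) ≤ ρ^2 * L k := by
    intro k
    apply hcontr k ρ
    · have h1 : εm / M ≤ εm / n k := by
        apply div_le_div_of_nonneg_left hεm.le (hnpos k) (hM k)
      have h2 : c1 / M ≤ εhat k * lmin := by
        have h3 : c1 / M = (εm / M) * lmin := by rw [hc1def]; ring
        rw [h3]
        exact mul_le_mul_of_nonneg_right (h1.trans (hnb k)) hlminpos.le
      have h4 : 1 - εhat k * lmin ≤ 1 - c1 / M := by linarith
      exact h4.trans (hρdef ▸ le_max_left _ _)
    · exact hβ'ge.trans (hρdef ▸ le_max_right _ _)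
  have hLgeo : ∀ k, L k ≤ (ρ^2)^k * L 0 := by
    intro k
    induction k with
    | zero => simp
    | succ k ih =>
      calc L (k + 1) ≤ ρ^2 * L k := hLcontr k
        _ ≤ ρ^2 * ((ρ^2)^k * L 0) := mul_le_mul_of_nonneg_left ih (sq_nonneg ρ)
        _ = (ρ^2)^(k+1) * L 0 := by ring
  -- geometric distance bound and Cauchy
  obtain ⟨C3, hC3def⟩ : ∃ x : ℝ, x = Real.sqrt (C2 * L 0 / n 0) := ⟨_, rfl⟩
  have hC3nn : 0 ≤ C3 := by rw [hC3def]; exact Real.sqrt_nonneg _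
  have hdist : ∀ k, dist (w k) (w (k + 1)) ≤ C3 * ρ^k := by
    intro k
    have hdd : (w (k + 1) - w k) ⬝ᵥ (w (k + 1) - w k) = n (k + 1) - n k := by
      rw [hninc k, hstep k, add_sub_cancel_left, smul_dotProduct, dotProduct_smul,
        smul_eq_mul, smul_eq_mul]
      ring
    have hb1 : n (k + 1) - n k ≤ (C3 * ρ^k)^2 := by
      have h1 : n (k + 1) - n k ≤ C2 * L k / n k := by linarith [hE4 k]
      have h2 : C2 * L k / n k ≤ C2 * ((ρ^2)^k * L 0) / n 0 := by
        apply div_le_div₀ ?_ ?_ (hnpos 0) (hnmono (Nat.zero_le k))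
        · exact mul_nonneg hC2nn (mul_nonneg (pow_nonneg (sq_nonneg ρ) k) (hLnn 0))
        · exact mul_le_mul_of_nonneg_left (hLgeo k) hC2nn
      have h3 : C2 * ((ρ^2)^k * L 0) / n 0 = (C3 * ρ^k)^2 := by
        rw [hC3def, mul_pow, Real.sq_sqrt
          (div_nonneg (mul_nonneg hC2nn (hLnn 0)) (hnpos 0).le)]
        rw [← pow_mul, ← pow_mul, Nat.mul_comm 2 k]
        ring
      linarith
    have hcoord : ∀ i, |w k i - w (k + 1) i| ≤ C3 * ρ^k := by
      intro i
      have h4 : (w (k + 1) i - w k i)^2 ≤ (C3 * ρ^k)^2 := by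
        have h5 : (w (k + 1) i - w k i)^2 ≤ (w (k + 1) - w k) ⬝ᵥ (w (k + 1) - w k) := by
          simp only [dotProduct, Pi.sub_apply]
          rw [sq]
          exact Finset.single_le_sum
            (f := fun j => (w (k + 1) j - w k j) * (w (k + 1) j - w k j))
            (fun j _ => mul_self_nonneg _) (Finset.mem_univ i)
        linarith [hdd ▸ h5, hb1]
      have h7 : |w (k + 1) i - w k i| ≤ C3 * ρ^k := by
        calc |w (k + 1) i - w k i| = Real.sqrt ((w (k + 1) i - w k i)^2) :=
              (Real.sqrt_sq_eq_abs _).symm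
          _ ≤ Real.sqrt ((C3 * ρ^k)^2) := Real.sqrt_le_sqrt h4
          _ = C3 * ρ^k := Real.sqrt_sq (by positivity)
      rwa [abs_sub_comm]
    rw [dist_pi_le_iff (by positivity)]
    intro i
    rw [Real.dist_eq]
    exact hcoord i
  have hcauchy : CauchySeq w := cauchySeq_of_le_geometric ρ C3 hρlt hdist
  obtain ⟨wstar, hwten⟩ := cauchySeq_tendsto_of_complete hcauchy
  -- continuity facts
  have hcdot : Continuous fun v : Fin d → ℝ => v ⬝ᵥ v := by
    simp only [dotProduct]
    exact continuous_finset_sum _ fun i _ => (continuous_apply i).mul (continuous_apply i)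
  have hcg : Continuous fun v : Fin d → ℝ => v ⬝ᵥ H *ᵥ u := by
    simp only [dotProduct]
    exact continuous_finset_sum _ fun i _ => (continuous_apply i).mul continuous_const
  have hcQ : Continuous fun v : Fin d → ℝ => v ⬝ᵥ H *ᵥ v := by
    simp only [dotProduct, mulVec]
    exact continuous_finset_sum _ fun i _ => (continuous_apply i).mul
      (continuous_finset_sum _ fun j _ => continuous_const.mul (continuous_apply j))
  have hn_t : Tendsto (fun k => w k ⬝ᵥ w k) atTop (nhds (wstar ⬝ᵥ wstar)) :=
    (hcdot.tendsto wstar).comp hwten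
  have hwstar_nz : wstar ≠ 0 := by
    intro h0
    have h1 : ∀ k, n 0 ≤ w k ⬝ᵥ w k := by
      intro k
      have := hnmono (Nat.zero_le k)
      simp only [hndef] at this ⊢
      exact this
    have h2 : n 0 ≤ wstar ⬝ᵥ wstar := ge_of_tendsto' hn_t h1
    rw [h0, zero_dotProduct] at h2
    linarith [hnpos 0]
  have hQws : 0 < wstar ⬝ᵥ H *ᵥ wstar := hQpos wstar hwstar_nz
  have hg_t : Tendsto (fun k => w k ⬝ᵥ H *ᵥ u) atTop (nhds (wstar ⬝ᵥ H *ᵥ u)) :=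
    (hcg.tendsto wstar).comp hwten
  have hQ_t : Tendsto (fun k => w k ⬝ᵥ H *ᵥ w k) atTop (nhds (wstar ⬝ᵥ H *ᵥ wstar)) :=
    (hcQ.tendsto wstar).comp hwten
  have hL_t : Tendsto L atTop
      (nhds (Qu - (wstar ⬝ᵥ H *ᵥ u)^2 / (wstar ⬝ᵥ H *ᵥ wstar))) := by
    rw [hLdef]
    exact tendsto_const_nhds.sub ((hg_t.pow 2).div hQ_t hQws.ne')
  have hL_0 : Tendsto L atTop (nhds 0) := by
    apply squeeze_zero hLnn hLgeo
    have h0 : (0:ℝ) ≤ ρ^2 := sq_nonneg ρ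
    have h1 : ρ^2 < 1 := by nlinarith
    simpa using (tendsto_pow_atTop_nhds_zero_of_lt_one h0 h1).mul_const (L 0)
  have hFzero : Qu - (wstar ⬝ᵥ H *ᵥ u)^2 / (wstar ⬝ᵥ H *ᵥ wstar) = 0 :=
    tendsto_nhds_unique hL_t hL_0
  have hd2 : (wstar ⬝ᵥ H *ᵥ u)^2 = Qu * (wstar ⬝ᵥ H *ᵥ wstar) := by
    have h1 : (wstar ⬝ᵥ H *ᵥ u)^2 / (wstar ⬝ᵥ H *ᵥ wstar) = Qu := by linarith
    rw [← h1]
    field_simp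
  -- wstar is parallel to u
  obtain ⟨sstar, hsstardef⟩ : ∃ x : ℝ,
      x = (wstar ⬝ᵥ H *ᵥ u) / (wstar ⬝ᵥ H *ᵥ wstar) := ⟨_, rfl⟩
  have hrstar : (u - sstar • wstar) ⬝ᵥ H *ᵥ (u - sstar • wstar) = 0 := by
    have hd2' := hd2
    rw [hQudef] at hd2'
    rw [bngd_expand H hsym u wstar sstar, bngd_dot_symm H hsym u wstar, hsstardef]
    field_simp
    nlinarith [hd2']
  have hrstar0 : u - sstar • wstar = 0 := by
    by_contra hne
    exact absurd hrstar (ne_of_gt (hQpos _ hne))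
  have husstar : u = sstar • wstar := by
    have := sub_eq_zero.mp hrstar0
    exact this
  have hsstar_ne : sstar ≠ 0 := by
    intro h
    rw [h, zero_smul] at husstar
    exact hu husstar
  have hwstar_eq : wstar = sstar⁻¹ • u := by
    rw [husstar, inv_smul_smul₀ hsstar_ne]
  -- the limit of a
  obtain ⟨astar, hastardef⟩ : ∃ x : ℝ, x = (wstar ⬝ᵥ H *ᵥ u) / σ wstar := ⟨_, rfl⟩
  have hσw : σ wstar = Real.sqrt (wstar ⬝ᵥ H *ᵥ wstar) := hσ wstar
  have hσwpos : 0 < σ wstar := by rw [hσw]; exact Real.sqrt_pos.mpr hQws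
  have hastar2 : astar^2 = Qu := by
    rw [hastardef, div_pow, hσw, Real.sq_sqrt hQws.le, hd2]
    field_simp
  have hσ_t : Tendsto (fun k => σ (w k)) atTop (nhds (σ wstar)) := by
    have heq1 : (fun k => σ (w k)) = fun k => Real.sqrt (w k ⬝ᵥ H *ᵥ w k) := funext hσk
    rw [heq1, hσw]
    exact (Real.continuous_sqrt.tendsto _).comp hQ_t
  have hb_t : Tendsto (fun k => (w k ⬝ᵥ H *ᵥ u) / σ (w k)) atTop (nhds astar) := by
    rw [hastardef]
    exact hg_t.div hσ_t hσwpos.ne'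
  have ha_t : Tendsto a atTop (nhds astar) := by
    apply bngd_tendsto_recur (1 - εa) ?_ a
      (fun k => εa * ((w k ⬝ᵥ H *ᵥ u) / σ (w k))) astar
    · intro k
      rw [ha k]
      ring
    · have heq2 : (1 - (1 - εa)) * astar = εa * astar := by ring
      rw [heq2]
      exact hb_t.const_mul εa
    · rw [abs_lt]
      constructor <;> linarith
  refine ⟨astar, wstar, sstar⁻¹, inv_ne_zero hsstar_ne, hwstar_eq, hastardef, ?_, ha_t, hwten⟩
  rw [hastar2, hQudef]
end
end

section
/- One-step contraction with the reduced matrix H*: For every k with w_k ≠ 0 and w_{k+1} ≠ 0, the BNGD iterates satisfy (1 − δ_k)·‖e_{k+1}‖_H ≤ (ρ*(I − ε̂_k H*) + δ_k)·‖e_k‖_H, where e_k := u − (w_kᵀg/σ(w_k)²)w_k, ε̂_k := ε(a_k/σ(w_k))(w_kᵀg/σ(w_k)²), δ_k := λ_max·ε·|a_k|·‖e_k‖_H/σ(w_k)², H* := H − (H u uᵀ H)/(uᵀHu), and ρ*(I − t H*) := max over the nonzero eigenvalues λ of H* of |1 − t·λ| (equivalently, max_{2 ≤ i ≤ d} |1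 − t·λ_i(H*)| where λ_i(H*) are the eigenvalues of H* in increasing order). -/
open Matrix Filter Topology

set_option maxHeartbeats 1600000

noncomputable section

namespace BNGDAux

variable {d : ℕ}

local notation "E" => EuclideanSpace ℝ (Fin d)

lemma sqrtdot_eq (x : Fin d → ℝ) :
    Real.sqrt (x ⬝ᵥ x) = ‖(WithLp.equiv 2 (Fin d → ℝ)).symm x‖ := by
  rw [EuclideanSpace.norm_eq]
  congr 1
  simp [dotProduct, Real.norm_eq_abs, sq_abs, pow_two]

lemma dot_nonneg (x : Fin d → ℝ) : 0 ≤ x ⬝ᵥ x :=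
  Finset.sum_nonneg fun i _ => mul_self_nonneg (x i)

lemma sqrtdot_add_le (x y : Fin d → ℝ) :
    Real.sqrt ((x + y) ⬝ᵥ (x + y)) ≤ Real.sqrt (x ⬝ᵥ x) + Real.sqrt (y ⬝ᵥ y) := by
  rw [sqrtdot_eq, sqrtdot_eq, sqrtdot_eq, WithLp.equiv_symm_apply, WithLp.toLp_add]
  exact norm_add_le _ _

lemma sqrtdot_smul (c : ℝ) (x : Fin d → ℝ) :
    Real.sqrt ((c • x) ⬝ᵥ (c • x)) = |c| * Real.sqrt (x ⬝ᵥ x) := by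
  rw [sqrtdot_eq, sqrtdot_eq, WithLp.equiv_symm_apply, WithLp.toLp_smul, norm_smul, Real.norm_eq_abs]

lemma inner_symm_dot (x y : Fin d → ℝ) :
    (inner ℝ ((WithLp.equiv 2 (Fin d → ℝ)).symm x) ((WithLp.equiv 2 (Fin d → ℝ)).symm y) : ℝ)
      = x ⬝ᵥ y := by
  rw [WithLp.equiv_symm_apply, EuclideanSpace.inner_toLp_toLp]
  simp [dotProduct_comm]

/-- master bound through an orthonormal basis -/
lemma onb_le (b : OrthonormalBasis (Fin d) ℝ E) (X Y : E) (C : ℝ) (hC : 0 ≤ C)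
    (h : ∀ i, |(inner ℝ (b i) Y : ℝ)| ≤ C * |(inner ℝ (b i) X : ℝ)|) : ‖Y‖ ≤ C * ‖X‖ := by
  rw [← b.repr.norm_map X, ← b.repr.norm_map Y, EuclideanSpace.norm_eq, EuclideanSpace.norm_eq]
  rw [show C * Real.sqrt (∑ i, ‖b.repr X i‖ ^ 2)
      = Real.sqrt (C ^ 2 * ∑ i, ‖b.repr X i‖ ^ 2) by
    rw [Real.sqrt_mul (sq_nonneg C), Real.sqrt_sq hC]]
  apply Real.sqrt_le_sqrt
  rw [Finset.mul_sum]
  apply Finset.sum_le_sum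
  intro i _
  rw [b.repr_apply_apply, b.repr_apply_apply, Real.norm_eq_abs, Real.norm_eq_abs, sq_abs, sq_abs]
  calc (inner ℝ (b i) Y : ℝ) ^ 2 = |(inner ℝ (b i) Y : ℝ)| ^ 2 := (sq_abs _).symm
    _ ≤ (C * |(inner ℝ (b i) X : ℝ)|) ^ 2 := by
        apply pow_le_pow_left₀ (abs_nonneg _) (h i)
    _ = C ^ 2 * (inner ℝ (b i) X : ℝ) ^ 2 := by rw [mul_pow, sq_abs]

variable {M : Matrix (Fin d) (Fin d) ℝ}

lemma evec_dot_mulVec (hM : M.IsHermitian) (i : Fin d) (x : Fin d → ℝ) :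
    ⇑(hM.eigenvectorBasis i) ⬝ᵥ (M *ᵥ x) = hM.eigenvalues i * (⇑(hM.eigenvectorBasis i) ⬝ᵥ x) := by
  have hMt : Mᵀ = M := by rw [← conjTranspose_eq_transpose_of_trivial, hM.eq]
  rw [dotProduct_mulVec, ← mulVec_transpose, hMt, hM.mulVec_eigenvectorBasis,
    smul_dotProduct, smul_eq_mul]

lemma inner_evec_symm (hM : M.IsHermitian) (i : Fin d) (x : Fin d → ℝ) :
    (inner ℝ (hM.eigenvectorBasis i) ((WithLp.equiv 2 (Fin d → ℝ)).symm x) : ℝ)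
      = ⇑(hM.eigenvectorBasis i) ⬝ᵥ x := by
  rw [EuclideanSpace.inner_eq_star_dotProduct]
  simp [dotProduct_comm]

/-- spectral bound for `x - t • M *ᵥ x` -/
lemma spectral_bound (hM : M.IsHermitian) (t C : ℝ) (hC : 0 ≤ C) (x : Fin d → ℝ)
    (h : ∀ i, |1 - t * hM.eigenvalues i| ≤ C ∨ ⇑(hM.eigenvectorBasis i) ⬝ᵥ x = 0) :
    Real.sqrt ((x - t • M *ᵥ x) ⬝ᵥ (x - t • M *ᵥ x)) ≤ C * Real.sqrt (x ⬝ᵥ x) := by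
  rw [sqrtdot_eq, sqrtdot_eq]
  apply onb_le (hM.eigenvectorBasis) _ _ C hC
  intro i
  rw [inner_evec_symm, inner_evec_symm]
  have : ⇑(hM.eigenvectorBasis i) ⬝ᵥ (x - t • M *ᵥ x)
      = (1 - t * hM.eigenvalues i) * (⇑(hM.eigenvectorBasis i) ⬝ᵥ x) := by
    rw [dotProduct_sub, dotProduct_smul, evec_dot_mulVec hM, smul_eq_mul]
    ring
  rw [this, abs_mul]
  rcases h i with h1 | h2
  · exact mul_le_mul_of_nonneg_right h1 (abs_nonneg _)
  · rw [h2]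
    simp
 
/-- operator norm style bound -/
lemma mulVec_bound (hM : M.IsHermitian) (C : ℝ) (hC : 0 ≤ C)
    (h : ∀ i, |hM.eigenvalues i| ≤ C) (x : Fin d → ℝ) :
    Real.sqrt ((M *ᵥ x) ⬝ᵥ (M *ᵥ x)) ≤ C * Real.sqrt (x ⬝ᵥ x) := by
  rw [sqrtdot_eq, sqrtdot_eq]
  apply onb_le (hM.eigenvectorBasis) _ _ C hC
  intro i
  rw [inner_evec_symm, inner_evec_symm, evec_dot_mulVec hM, abs_mul]
  exact mul_le_mul_of_nonneg_right (h i) (abs_nonneg _)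

lemma eigen_mem (hM : M.IsHermitian) {lam : ℝ} {y : Fin d → ℝ} (hy : y ≠ 0)
    (hMy : M *ᵥ y = lam • y) : ∃ j, hM.eigenvalues j = lam := by
  by_contra hcon
  push_neg at hcon
  have hall : ∀ j, ⇑(hM.eigenvectorBasis j) ⬝ᵥ y = 0 := by
    intro j
    have h1 : hM.eigenvalues j * (⇑(hM.eigenvectorBasis j) ⬝ᵥ y)
        = lam * (⇑(hM.eigenvectorBasis j) ⬝ᵥ y) := by
      rw [← evec_dot_mulVec hM, hMy, dotProduct_smul, smul_eq_mul]
    rcases mul_eq_mul_right_iff.mp h1 with h | h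
    · exact absurd h (hcon j)
    · exact h
  apply hy
  have hY : (WithLp.equiv 2 (Fin d → ℝ)).symm y = 0 := by
    have := (hM.eigenvectorBasis).sum_repr' ((WithLp.equiv 2 (Fin d → ℝ)).symm y)
    rw [← this]
    apply Finset.sum_eq_zero
    intro i _
    rw [inner_evec_symm, hall i, zero_smul]
  simpa using congrArg (WithLp.equiv 2 (Fin d → ℝ)) hY

lemma vecMulVec_mulVec (w v x : Fin d → ℝ) :
    vecMulVec w v *ᵥ x = (v ⬝ᵥ x) • w := by
  funext i
  simp [vecMulVec, mulVec, dotProduct, Finset.mul_sum, Finset.sum_mul, mul_comm, mul_left_comm]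

lemma vecMulVec_transpose' (w v : Fin d → ℝ) :
    (vecMulVec w v)ᵀ = vecMulVec v w := by
  ext i j
  simp [vecMulVec, transpose_apply, mul_comm]

section sqrtSec

open scoped MatrixOrder

lemma exists_sqrt {H : Matrix (Fin d) (Fin d) ℝ} (hH : H.PosDef) :
    ∃ S : Matrix (Fin d) (Fin d) ℝ, S * S = H ∧ Sᵀ = S :=
  ⟨CFC.sqrt H, CFC.sqrt_mul_sqrt_self H hH.posSemidef.nonneg, by
    rw [← conjTranspose_eq_transpose_of_trivial]; exact (CFC.sqrt_nonneg H).posSemidef.1.eq⟩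

end sqrtSec

end BNGDAux

/-- One-step contraction with the reduced matrix `H* = H − Huuᵀ H/(uᵀHu)`:
`(1 − δ_k)·‖e_{k+1}‖_H ≤ (ρ*(I − ε̂_k H*) + δ_k)·‖e_k‖_H`, where `ρ*` is the maximum of
`|1 − ε̂_k λ|` over the nonzero eigenvalues `λ` of `H*`, and
`δ_k = λ_max·ε·|a_k|·‖e_k‖_H/σ(w_k)²`. -/
theorem bngd_one_step_contraction_Hstar
    {d : ℕ} (hd : 2 ≤ d)
    (H : Matrix (Fin d) (Fin d) ℝ) (hH : H.PosDef)
    (u : Fin d → ℝ) (hu : u ≠ 0)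
    (εa ε : ℝ) (hεa : 0 < εa) (hε : 0 < ε)
    (g : Fin d → ℝ) (hg : g = H.mulVec u)
    (σ : (Fin d → ℝ) → ℝ) (hσ : ∀ v, σ v = Real.sqrt (v ⬝ᵥ H.mulVec v))
    (normH : (Fin d → ℝ) → ℝ) (hnormH : ∀ x, normH x = Real.sqrt (x ⬝ᵥ H.mulVec x))
    (a : ℕ → ℝ) (w : ℕ → Fin d → ℝ) (hw0 : w 0 ≠ 0)
    (ha : ∀ k, a (k + 1) = a k + εa * ((w k ⬝ᵥ g) / σ (w k) - a k))
    (hw : ∀ k, w (k + 1) = w k +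
      (ε * (a k / σ (w k))) • (g - ((w k ⬝ᵥ g) / (σ (w k)) ^ 2) • H.mulVec (w k)))
    (e : ℕ → Fin d → ℝ)
    (he : ∀ k, e k = u - ((w k ⬝ᵥ g) / (σ (w k)) ^ 2) • w k)
    (εhat : ℕ → ℝ)
    (hεhat : ∀ k, εhat k = ε * (a k / σ (w k)) * ((w k ⬝ᵥ g) / (σ (w k)) ^ 2))
    (δ : ℕ → ℝ)
    (hδ : ∀ k, δ k = (⨆ i, hH.1.eigenvalues i) * ε * |a k| * normH (e k) / (σ (w k)) ^ 2)
    (Hs : Matrix (Fin d) (Fin d) ℝ)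
    (hHsdef : Hs = H - (u ⬝ᵥ H.mulVec u)⁻¹ • vecMulVec (H.mulVec u) (H.mulVec u))
    (hHs : Hs.IsHermitian) :
    ∀ k, w k ≠ 0 → w (k + 1) ≠ 0 →
      (1 - δ k) * normH (e (k + 1)) ≤
        ((⨆ i : {j : Fin d // hHs.eigenvalues j ≠ 0}, |1 - εhat k * hHs.eigenvalues i.1|) +
            δ k) * normH (e k) := by
  intro k hwk hwk1
  -- basic symmetric-matrix tools
  have hHt : Hᵀ = H := by rw [← conjTranspose_eq_transpose_of_trivial, hH.1.eq]
  have hsymm : ∀ (M : Matrix (Fin d) (Fin d) ℝ), Mᵀ = M →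
      ∀ x y : Fin d → ℝ, x ⬝ᵥ M *ᵥ y = y ⬝ᵥ M *ᵥ x := by
    intro M hM x y
    rw [dotProduct_mulVec, ← mulVec_transpose, hM, dotProduct_comm]
  have hdotpos : ∀ x : Fin d → ℝ, x ≠ 0 → 0 < x ⬝ᵥ H *ᵥ x := by
    intro x hx
    have := hH.dotProduct_mulVec_pos hx
    simpa using this
  have hdotnn : ∀ x : Fin d → ℝ, 0 ≤ x ⬝ᵥ H *ᵥ x := by
    intro x
    by_cases hx : x = 0
    · subst hx; simp
    · exact le_of_lt (hdotpos x hx)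
  -- square root of H
  obtain ⟨S, hSS, hSt⟩ := BNGDAux.exists_sqrt hH
  have hHS : H * S = S * H := by rw [← hSS, Matrix.mul_assoc]
  have hNsq : ∀ x : Fin d → ℝ, x ⬝ᵥ H *ᵥ x = (S *ᵥ x) ⬝ᵥ (S *ᵥ x) := by
    intro x
    conv_rhs => rw [hsymm S hSt (S *ᵥ x) x, mulVec_mulVec, hSS]
  have hNB : ∀ x, normH x = Real.sqrt ((S *ᵥ x) ⬝ᵥ (S *ᵥ x)) := by
    intro x; rw [hnormH, hNsq]
  have hNnn : ∀ x, 0 ≤ normH x := by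
    intro x; rw [hnormH]; exact Real.sqrt_nonneg _
  have hNsq' : ∀ x, (normH x) ^ 2 = x ⬝ᵥ H *ᵥ x := by
    intro x; rw [hnormH]; exact Real.sq_sqrt (hdotnn x)
  have hNadd : ∀ x y, normH (x + y) ≤ normH x + normH y := by
    intro x y
    rw [hNB, hNB, hNB, mulVec_add]
    exact BNGDAux.sqrtdot_add_le _ _
  have hNsmul : ∀ (r : ℝ) x, normH (r • x) = |r| * normH x := by
    intro r x
    rw [hNB, hNB, mulVec_smul]
    exact BNGDAux.sqrtdot_smul _ _
  -- scalar abbreviations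
  have heK := he k
  have heK1 := he (k + 1)
  have hwK := hw k
  have htK := hεhat k
  have hdK := hδ k
  set s := σ (w k) with hs_def
  have hs2 : s ^ 2 = w k ⬝ᵥ H *ᵥ w k := by rw [hs_def, hσ]; exact Real.sq_sqrt (hdotnn _)
  have hspos : 0 < s := by rw [hs_def, hσ]; exact Real.sqrt_pos.mpr (hdotpos _ hwk)
  set c := (w k ⬝ᵥ g) / s ^ 2 with hc_def
  set τ := ε * (a k / s) with hτ_def
  set β := u ⬝ᵥ H *ᵥ u with hβ_def
  have hβpos : 0 < β := hdotpos u hu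
  have hβne : β ≠ 0 := ne_of_gt hβpos
  have hBwwne : w k ⬝ᵥ H *ᵥ w k ≠ 0 := ne_of_gt (hdotpos _ hwk)
  have hgu : ∀ x : Fin d → ℝ, g ⬝ᵥ x = u ⬝ᵥ H *ᵥ x := by
    intro x
    rw [hg, dotProduct_comm, hsymm H hHt x u]
  have hwg : w k ⬝ᵥ g = u ⬝ᵥ H *ᵥ w k := by rw [dotProduct_comm, hgu]
  have hguβ : g ⬝ᵥ u = β := by rw [hgu]
  have hc2 : c = (u ⬝ᵥ H *ᵥ w k) / (w k ⬝ᵥ H *ᵥ w k) := by rw [hc_def, hwg, hs2]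
  -- recursion in e-form
  have hw' : w (k + 1) = w k + τ • (H *ᵥ e k) := by
    rw [hwK, heK]
    congr 1
    rw [mulVec_sub, mulVec_smul, ← hg]
  -- orthogonality and its consequence
  have horth : w k ⬝ᵥ H *ᵥ e k = 0 := by
    rw [heK, mulVec_sub, mulVec_smul, dotProduct_sub, dotProduct_smul, smul_eq_mul, ← hg, hc_def,
      hs2]
    field_simp
    simp
  have hBue : u ⬝ᵥ H *ᵥ e k = e k ⬝ᵥ H *ᵥ e k := by
    have hu_eq : u = e k + c • w k := by rw [heK]; module
    conv_lhs => rw [hu_eq]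
    rw [add_dotProduct, smul_dotProduct, horth, smul_eq_mul, mul_zero, add_zero]
  -- eigenvalue sup of H
  set L := ⨆ i, hH.1.eigenvalues i with hL_def
  have hLub : ∀ i, hH.1.eigenvalues i ≤ L :=
    fun i => le_ciSup (Set.Finite.bddAbove (Set.finite_range _)) i
  have hLpos : 0 < L := lt_of_lt_of_le (hH.eigenvalues_pos ⟨0, by omega⟩) (hLub _)
  have hHbound : ∀ x, normH (H *ᵥ x) ≤ L * normH x := by
    intro x
    rw [hNB, hNB]
    have h1 : S *ᵥ (H *ᵥ x) = H *ᵥ (S *ᵥ x) := by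
      rw [mulVec_mulVec, mulVec_mulVec, hHS]
    rw [h1]
    exact BNGDAux.mulVec_bound hH.1 L (le_of_lt hLpos)
      (fun i => by rw [abs_of_pos (hH.eigenvalues_pos i)]; exact hLub i) (S *ᵥ x)
  -- |τ| and δ·s
  have hτabs : |τ| = ε * |a k| / s := by
    rw [hτ_def, abs_mul, abs_div, abs_of_pos hε, abs_of_pos hspos]
    ring
  have hsne : s ≠ 0 := ne_of_gt hspos
  have hδs : δ k * s = |τ| * (L * normH (e k)) := by
    rw [hdK, hτabs]
    field_simp
  -- Step 1 : lower bound on σ (w (k+1))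
  have hstep1 : (1 - δ k) * s ≤ σ (w (k + 1)) := by
    have hwk_eq : w k = w (k + 1) + (-τ) • (H *ᵥ e k) := by rw [hw']; module
    have h1 : normH (w k) ≤ normH (w (k + 1)) + |(-τ)| * normH (H *ᵥ e k) := by
      calc normH (w k) = normH (w (k + 1) + (-τ) • (H *ᵥ e k)) := by rw [← hwk_eq]
        _ ≤ normH (w (k + 1)) + normH ((-τ) • (H *ᵥ e k)) := hNadd _ _
        _ = normH (w (k + 1)) + |(-τ)| * normH (H *ᵥ e k) := by rw [hNsmul]
    rw [abs_neg] at h1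
    have h2 : |τ| * normH (H *ᵥ e k) ≤ |τ| * (L * normH (e k)) :=
      mul_le_mul_of_nonneg_left (hHbound _) (abs_nonneg _)
    have h3 : normH (w k) = s := by rw [hnormH, hs_def, hσ]
    have h4 : normH (w (k + 1)) = σ (w (k + 1)) := by rw [hnormH, hσ]
    have h5 : (1 - δ k) * s = s - δ k * s := by ring
    rw [h5, hδs]
    linarith only [h1, h2, h3, h4]
  -- residual identity
  have hexp : ∀ (x y : Fin d → ℝ) (r : ℝ), (x - r • y) ⬝ᵥ H *ᵥ (x - r • y)
      = x ⬝ᵥ H *ᵥ x - 2 * r * (x ⬝ᵥ H *ᵥ y) + r ^ 2 * (y ⬝ᵥ H *ᵥ y) := by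
    intro x y r
    rw [mulVec_sub, mulVec_smul, sub_dotProduct, smul_dotProduct, dotProduct_sub, dotProduct_sub,
      dotProduct_smul, dotProduct_smul, smul_eq_mul, smul_eq_mul, smul_eq_mul, hsymm H hHt y x]
    ring
  have hRI : ∀ v : Fin d → ℝ, v ≠ 0 →
      (v ⬝ᵥ H *ᵥ v) * (normH (u - ((v ⬝ᵥ g) / (σ v) ^ 2) • v)) ^ 2
        = β * (v ⬝ᵥ H *ᵥ v) - (u ⬝ᵥ H *ᵥ v) ^ 2 := by
    intro v hv
    have h2 : (σ v) ^ 2 = v ⬝ᵥ H *ᵥ v := by rw [hσ]; exact Real.sq_sqrt (hdotnn v)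
    have hvne : v ⬝ᵥ H *ᵥ v ≠ 0 := ne_of_gt (hdotpos v hv)
    rw [hNsq', hexp, h2, dotProduct_comm v g, hgu]
    field_simp
    ring
  -- main vectors
  set z := w k - (β⁻¹ * (u ⬝ᵥ H *ᵥ w k)) • u with hz_def
  set m' := w (k + 1) - (β⁻¹ * (u ⬝ᵥ H *ᵥ w (k + 1))) • u with hm'_def
  set Pz := H *ᵥ z - (β⁻¹ * (g ⬝ᵥ (H *ᵥ z))) • u with hPz_def
  set Pg := g - (β⁻¹ * (g ⬝ᵥ g)) • u with hPg_def
  set γ := τ * (β⁻¹ * (e k ⬝ᵥ H *ᵥ e k)) with hγ_def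
  -- norm product identities
  have sqle : ∀ A B : ℝ, 0 ≤ A → 0 ≤ B → A ^ 2 ≤ B ^ 2 → A ≤ B := by
    intro A B hA hB h
    calc A = Real.sqrt (A ^ 2) := (Real.sqrt_sq hA).symm
      _ ≤ Real.sqrt (B ^ 2) := Real.sqrt_le_sqrt h
      _ = B := Real.sqrt_sq hB
  have sq_eq : ∀ A B : ℝ, 0 ≤ A → 0 ≤ B → A ^ 2 = B ^ 2 → A = B := by
    intro A B hA hB h
    exact le_antisymm (sqle A B hA hB (le_of_eq h)) (sqle B A hB hA (le_of_eq h.symm))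
  have hNuNz : normH u * normH z = s * normH (e k) := by
    apply sq_eq _ _ (mul_nonneg (hNnn u) (hNnn z)) (mul_nonneg (le_of_lt hspos) (hNnn _))
    rw [mul_pow, mul_pow, hNsq' u, ← hβ_def]
    have hz2 : β * (normH z) ^ 2 = β * (w k ⬝ᵥ H *ᵥ w k) - (u ⬝ᵥ H *ᵥ w k) ^ 2 := by
      rw [hNsq', hz_def, hexp, hsymm H hHt (w k) u]
      field_simp
      ring
    have h5 := hRI (w k) hwk
    rw [← hs_def, ← hc_def, ← heK] at h5
    rw [hs2]
    linarith only [hz2, h5]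
  have hσ2' : (σ (w (k + 1))) ^ 2 = w (k + 1) ⬝ᵥ H *ᵥ w (k + 1) := by
    rw [hσ]; exact Real.sq_sqrt (hdotnn _)
  have hNuNm' : normH u * normH m' = σ (w (k + 1)) * normH (e (k + 1)) := by
    apply sq_eq _ _ (mul_nonneg (hNnn u) (hNnn m'))
      (mul_nonneg (by rw [hσ]; exact Real.sqrt_nonneg _) (hNnn _))
    rw [mul_pow, mul_pow, hNsq' u, ← hβ_def]
    have hm2 : β * (normH m') ^ 2
        = β * (w (k + 1) ⬝ᵥ H *ᵥ w (k + 1)) - (u ⬝ᵥ H *ᵥ w (k + 1)) ^ 2 := by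
      rw [hNsq', hm'_def, hexp, hsymm H hHt (w (k + 1)) u]
      field_simp
      ring
    have h6 := hRI (w (k + 1)) hwk1
    rw [← heK1] at h6
    rw [hσ2']
    linarith only [hm2, h6]
  -- the key algebraic identity
  have hI1 : m' = (z - εhat k • Pz) + γ • Pg := by
    rw [hm'_def, hPz_def, hPg_def, hz_def, hγ_def, htK, hw', heK, hc2]
    simp only [hgu]
    rw [hg]
    simp only [mulVec_add, mulVec_sub, mulVec_smul, dotProduct_add, dotProduct_sub,
      dotProduct_smul, add_dotProduct, sub_dotProduct, smul_dotProduct, smul_eq_mul,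
      hsymm H hHt (w k) u]
    try rw [← hβ_def]
    match_scalars <;>
      (try simp only [hsymm H hHt (w k) u, mulVec_mulVec]) <;>
      (try field_simp) <;> (try ring1)
  -- the sup over nonzero eigenvalues of Hs
  set ρ := ⨆ i : {j : Fin d // hHs.eigenvalues j ≠ 0}, |1 - εhat k * hHs.eigenvalues i.1|
    with hρ_def
  have hbdd : BddAbove (Set.range fun i : {j : Fin d // hHs.eigenvalues j ≠ 0} =>
      |1 - εhat k * hHs.eigenvalues i.1|) := Set.Finite.bddAbove (Set.finite_range _)
  have hNE : Nonempty {j : Fin d // hHs.eigenvalues j ≠ 0} := by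
    have hgne : g ≠ 0 := by
      intro h0
      exact hβne (by rw [← hguβ, h0, zero_dotProduct])
    obtain ⟨i0, hi0⟩ := Function.ne_iff.mp hgne
    obtain ⟨j0, hj0⟩ := Fintype.exists_ne_of_one_lt_card
      (by rw [Fintype.card_fin]; omega) i0
    set x : Fin d → ℝ := g j0 • (Pi.single i0 1 : Fin d → ℝ) - g i0 • (Pi.single j0 1 : Fin d → ℝ) with hx_def
    have hxg : g ⬝ᵥ x = 0 := by
      rw [hx_def, dotProduct_sub, dotProduct_smul, dotProduct_smul, dotProduct_single,
        dotProduct_single, smul_eq_mul, smul_eq_mul]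
      ring
    have hx0 : x ≠ 0 := by
      intro h0
      have h1 := congrFun h0 j0
      rw [hx_def] at h1
      simp only [Pi.sub_apply, Pi.smul_apply, smul_eq_mul, Pi.zero_apply] at h1
      rw [Pi.single_eq_of_ne hj0, Pi.single_eq_same] at h1
      simp at h1
      exact absurd h1 hi0
    by_contra hne
    rw [not_nonempty_iff] at hne
    have hall : ∀ j, hHs.eigenvalues j = 0 := by
      intro j
      by_contra hj
      exact hne.false ⟨j, hj⟩
    have h0 : Hs *ᵥ x = 0 := by
      have hb := BNGDAux.mulVec_bound hHs 0 le_rfl (fun i => by rw [hall i]; simp) x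
      rw [zero_mul] at hb
      have h1 : (Hs *ᵥ x) ⬝ᵥ (Hs *ᵥ x) = 0 :=
        (Real.sqrt_eq_zero (BNGDAux.dot_nonneg _)).mp
          (le_antisymm hb (Real.sqrt_nonneg _))
      exact dotProduct_self_eq_zero.mp h1
    have hxHsx : x ⬝ᵥ (Hs *ᵥ x) = x ⬝ᵥ H *ᵥ x := by
      rw [hHsdef, sub_mulVec, smul_mulVec, BNGDAux.vecMulVec_mulVec, ← hg, hxg]
      simp
    rw [h0, dotProduct_zero] at hxHsx
    exact absurd hxHsx.symm (ne_of_gt (hdotpos x hx0))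
  have hρnn : 0 ≤ ρ := by
    obtain ⟨j⟩ := hNE
    exact le_trans (abs_nonneg _) (le_ciSup hbdd j)
  -- core spectral bound
  have hcore : normH (z - εhat k • Pz) ≤ ρ * normH z := by
    set vv := S *ᵥ u with hvv_def
    set Pim : Matrix (Fin d) (Fin d) ℝ := 1 - β⁻¹ • vecMulVec vv vv with hPim_def
    set G := Pim * H * Pim with hG_def
    have hPiapp : ∀ x, Pim *ᵥ x = x - (β⁻¹ * (vv ⬝ᵥ x)) • vv := by
      intro x
      rw [hPim_def, sub_mulVec, one_mulVec, smul_mulVec, BNGDAux.vecMulVec_mulVec,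
        smul_smul]
    have hvx : ∀ x, vv ⬝ᵥ (S *ᵥ x) = g ⬝ᵥ x := by
      intro x
      rw [hvv_def, hsymm S hSt (S *ᵥ u) x, mulVec_mulVec, hSS, hsymm H hHt x u, ← hgu]
    have hSP : ∀ x, S *ᵥ (x - (β⁻¹ * (g ⬝ᵥ x)) • u) = Pim *ᵥ (S *ᵥ x) := by
      intro x
      rw [hPiapp, hvx, mulVec_sub, mulVec_smul, ← hvv_def]
    have hGapp : ∀ x, G *ᵥ x = Pim *ᵥ (H *ᵥ (Pim *ᵥ x)) := by
      intro x
      rw [hG_def, ← mulVec_mulVec, ← mulVec_mulVec]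
    have hgz : g ⬝ᵥ z = 0 := by
      rw [hz_def, dotProduct_sub, dotProduct_smul, smul_eq_mul, hgu (w k), hgu u]
      rw [← hβ_def]
      field_simp
      simp
    have hq : Pim *ᵥ (S *ᵥ z) = S *ᵥ z := by
      rw [hPiapp, hvx, hgz]
      simp
    have hSH' : ∀ x, S *ᵥ (H *ᵥ x) = H *ᵥ (S *ᵥ x) := by
      intro x
      rw [mulVec_mulVec, mulVec_mulVec, hHS]
    have hSzPz : S *ᵥ (z - εhat k • Pz) = (S *ᵥ z) - εhat k • (G *ᵥ (S *ᵥ z)) := by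
      rw [mulVec_sub, mulVec_smul, hGapp, hq, hPz_def, hSP (H *ᵥ z), hSH']
    have hPit : Pimᵀ = Pim := by
      rw [hPim_def, transpose_sub, transpose_one, transpose_smul,
        BNGDAux.vecMulVec_transpose']
    have hGherm : G.IsHermitian := by
      show Gᴴ = G
      rw [conjTranspose_eq_transpose_of_trivial, hG_def, transpose_mul, transpose_mul, hHt,
        hPit, Matrix.mul_assoc]
    have hdetS : IsUnit S.det := by
      have h1 : S.det * S.det = H.det := by rw [← det_mul, hSS]
      have h2 : 0 < H.det := hH.det_pos
      apply isUnit_iff_ne_zero.mpr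
      intro h0
      rw [h0, zero_mul] at h1
      linarith only [h1, h2]
    have hSinv : ∀ x, S⁻¹ *ᵥ (S *ᵥ x) = x := by
      intro x
      rw [mulVec_mulVec, nonsing_inv_mul S hdetS, one_mulVec]
    have hSinv' : ∀ x, S *ᵥ (S⁻¹ *ᵥ x) = x := by
      intro x
      rw [mulVec_mulVec, mul_nonsing_inv S hdetS, one_mulVec]
    have hgP : ∀ Y : Fin d → ℝ, g ⬝ᵥ (Y - (β⁻¹ * (g ⬝ᵥ Y)) • u) = 0 := by
      intro Y
      rw [dotProduct_sub, dotProduct_smul, smul_eq_mul, hguβ]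
      field_simp
      simp
    rw [hNB, hNB, hSzPz]
    apply BNGDAux.spectral_bound hGherm (εhat k) ρ hρnn (S *ᵥ z)
    intro i
    by_cases hlam : hGherm.eigenvalues i = 0
    · right
      have hvec0 : G *ᵥ ⇑(hGherm.eigenvectorBasis i) = 0 := by
        rw [hGherm.mulVec_eigenvectorBasis, hlam, zero_smul]
      have h1 : ⇑(hGherm.eigenvectorBasis i) ⬝ᵥ (G *ᵥ ⇑(hGherm.eigenvectorBasis i)) = 0 := by
        rw [hvec0, dotProduct_zero]
      rw [hGapp, dotProduct_mulVec, ← mulVec_transpose, hPit] at h1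
      have hPv : Pim *ᵥ ⇑(hGherm.eigenvectorBasis i) = 0 := by
        by_contra hne0
        exact (ne_of_gt (hdotpos _ hne0)) h1
      have hvi : ⇑(hGherm.eigenvectorBasis i)
          = (β⁻¹ * (vv ⬝ᵥ ⇑(hGherm.eigenvectorBasis i))) • vv := by
        have h2 := hPv
        rw [hPiapp] at h2
        exact sub_eq_zero.mp h2
      rw [hvi, smul_dotProduct, hvx, hgz, smul_eq_mul, mul_zero]
    · left
      have hGv : G *ᵥ ⇑(hGherm.eigenvectorBasis i)
          = hGherm.eigenvalues i • ⇑(hGherm.eigenvectorBasis i) :=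
        hGherm.mulVec_eigenvectorBasis i
      set z0 := S⁻¹ *ᵥ ⇑(hGherm.eigenvectorBasis i) with hz0_def
      have hz0S : S *ᵥ z0 = ⇑(hGherm.eigenvectorBasis i) := hSinv' _
      set p1 := z0 - (β⁻¹ * (g ⬝ᵥ z0)) • u with hp1_def
      set p2 := (H *ᵥ p1) - (β⁻¹ * (g ⬝ᵥ (H *ᵥ p1))) • u with hp2_def
      have hSp2 : S *ᵥ p2 = S *ᵥ (hGherm.eigenvalues i • z0) := by
        rw [hp2_def, hSP (H *ᵥ p1), hSH', hp1_def, hSP z0, ← hGapp, hz0S, hGv, mulVec_smul,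
          hz0S]
      have hp2eq : p2 = hGherm.eigenvalues i • z0 := by
        have h3 := congrArg (fun y => S⁻¹ *ᵥ y) hSp2
        simpa only [hSinv] using h3
      have hgz0 : g ⬝ᵥ z0 = 0 := by
        have h4 : g ⬝ᵥ p2 = 0 := by rw [hp2_def]; exact hgP _
        rw [hp2eq, dotProduct_smul, smul_eq_mul] at h4
        exact (mul_eq_zero.mp h4).resolve_left hlam
      have hp1z : p1 = z0 := by
        rw [hp1_def, hgz0]
        simp
      have hz0ne : z0 ≠ 0 := by
        intro h0
        have h5 : ⇑(hGherm.eigenvectorBasis i) = 0 := by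
          rw [← hz0S, h0, mulVec_zero]
        exact hGherm.eigenvectorBasis.orthonormal.ne_zero i
          (by simpa using h5)
      have hHsapp : ∀ x, Hs *ᵥ x = H *ᵥ x - (β⁻¹ * (g ⬝ᵥ x)) • g := by
        intro x
        rw [hHsdef, sub_mulVec, smul_mulVec, BNGDAux.vecMulVec_mulVec, ← hg, smul_smul]
      have hy : Hs *ᵥ (H *ᵥ z0) = hGherm.eigenvalues i • (H *ᵥ z0) := by
        rw [hHsapp]
        have e2 : H *ᵥ p2 = H *ᵥ (H *ᵥ z0) - (β⁻¹ * (g ⬝ᵥ (H *ᵥ z0))) • g := by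
          rw [hp2_def, hp1z, mulVec_sub, mulVec_smul, ← hg]
        rw [← e2, hp2eq, mulVec_smul]
      have hyne : H *ᵥ z0 ≠ 0 := by
        intro h0
        have h6 := hdotpos z0 hz0ne
        rw [h0, dotProduct_zero] at h6
        exact lt_irrefl 0 h6
      obtain ⟨j, hj⟩ := BNGDAux.eigen_mem hHs hyne hy
      have hjne : hHs.eigenvalues j ≠ 0 := by rw [hj]; exact hlam
      have h7 := le_ciSup hbdd (⟨j, hjne⟩ : {j : Fin d // hHs.eigenvalues j ≠ 0})
      rw [hρ_def]
      simpa [hj] using h7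
  -- bound on Pg
  have hPgle : normH Pg ≤ L * normH u := by
    have heq : Pg ⬝ᵥ H *ᵥ Pg = g ⬝ᵥ H *ᵥ g - β⁻¹ * (g ⬝ᵥ g) ^ 2 := by
      rw [hPg_def, hexp, hsymm H hHt g u, ← hgu]
      field_simp
      ring
    have h1 : normH Pg ^ 2 ≤ normH g ^ 2 := by
      rw [hNsq', hNsq', heq]
      have h2 : 0 ≤ β⁻¹ * (g ⬝ᵥ g) ^ 2 := by positivity
      linarith only [h2]
    have h2 : normH g ≤ L * normH u := by rw [hg]; exact hHbound u
    have h3 : normH Pg ≤ normH g := sqle _ _ (hNnn Pg) (hNnn g) h1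
    linarith only [h2, h3]
  -- assemble
  have hγabs : |γ| = |τ| * (β⁻¹ * (e k ⬝ᵥ H *ᵥ e k)) := by
    rw [hγ_def, abs_mul]
    congr 1
    exact abs_of_nonneg (mul_nonneg (inv_nonneg.mpr (le_of_lt hβpos)) (hdotnn _))
  have hm'le : normH m' ≤ ρ * normH z + |γ| * normH Pg := by
    rw [hI1]
    calc normH ((z - εhat k • Pz) + γ • Pg)
        ≤ normH (z - εhat k • Pz) + normH (γ • Pg) := hNadd _ _
      _ = normH (z - εhat k • Pz) + |γ| * normH Pg := by rw [hNsmul]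
      _ ≤ ρ * normH z + |γ| * normH Pg := by
          exact add_le_add hcore le_rfl
  have hNu2 : normH u * normH u = β := by
    have h1 := hNsq' u
    rw [pow_two] at h1
    rw [h1, ← hβ_def]
  have hNe2 : normH (e k) * normH (e k) = e k ⬝ᵥ H *ᵥ e k := by
    have h1 := hNsq' (e k)
    rw [pow_two] at h1
    exact h1
  have hsecond : |γ| * (L * normH u) * normH u = δ k * s * normH (e k) := by
    rw [hγabs, ← hNe2]
    have h1 : δ k * s * normH (e k) = (δ k * s) * normH (e k) := by ring
    rw [h1, hδs]
    have h2 : |τ| * (β⁻¹ * (normH (e k) * normH (e k))) * (L * normH u) * normH u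
        = |τ| * (L * normH (e k)) * normH (e k) * (β⁻¹ * (normH u * normH u)) := by ring
    rw [h2, hNu2, inv_mul_cancel₀ hβne, mul_one]
  have hch : normH u * normH m' ≤ (ρ + δ k) * (s * normH (e k)) := by
    calc normH u * normH m'
        ≤ normH u * (ρ * normH z + |γ| * normH Pg) :=
          mul_le_mul_of_nonneg_left hm'le (hNnn u)
      _ = ρ * (normH u * normH z) + |γ| * normH Pg * normH u := by ring
      _ ≤ ρ * (s * normH (e k)) + |γ| * (L * normH u) * normH u := by
          rw [hNuNz]
          refine add_le_add le_rfl ?_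
          have := mul_le_mul_of_nonneg_left hPgle (abs_nonneg γ)
          exact mul_le_mul_of_nonneg_right this (hNnn u)
      _ = (ρ + δ k) * (s * normH (e k)) := by rw [hsecond]; ring
  have hfin : σ (w (k + 1)) * normH (e (k + 1)) ≤ (ρ + δ k) * (s * normH (e k)) := by
    rw [← hNuNm']
    exact hch
  have h9 : (1 - δ k) * s * normH (e (k + 1)) ≤ σ (w (k + 1)) * normH (e (k + 1)) :=
    mul_le_mul_of_nonneg_right hstep1 (hNnn _)
  have h10 : s * ((1 - δ k) * normH (e (k + 1))) ≤ s * ((ρ + δ k) * normH (e k)) := by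
    have ht := le_trans h9 hfin
    calc s * ((1 - δ k) * normH (e (k + 1)))
        = (1 - δ k) * s * normH (e (k + 1)) := by ring
      _ ≤ (ρ + δ k) * (s * normH (e k)) := ht
      _ = s * ((ρ + δ k) * normH (e k)) := by ring
  exact le_of_mul_le_mul_left h10 hspos
end
end

section
/- Eigenvalue interlacing for the BN-reduced matrix: Let H be a d×d real symmetric positive definite matrix and u ∈ ℝ^d nonzero, and set H* := H − (H u uᵀ H)/(uᵀHu). Then H* is positive semidefinite with H*u = 0, and denoting by λ_1(M) ≤ ... ≤ λ_d(M) the eigenvalues of a symmetric matrix M in increasing order, one has 0 = λ_1(H*) < λ_1(H) ≤ λ_2(H*) ≤ λ_2(H) ≤ λ_3(H*) ≤ ... ≤ λ_d(H*) ≤ λ_d(H); that is, λ_1(H*) = 0 and λ_{i-1}(H) ≤ λ_i(H*) ≤ λ_i(H) for all 2 ≤ i ≤ d. -/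
open Matrix Polynomial

noncomputable section
section Aux
open Finset Module
variable {d : ℕ}

lemma charpoly_eval {d : ℕ} (M : Matrix (Fin d) (Fin d) ℝ) (t : ℝ) :
    M.charpoly.eval t = det (t • (1 : Matrix (Fin d) (Fin d) ℝ) - M) := by
  rw [Matrix.charpoly, show (Polynomial.eval t) = ((Polynomial.evalRingHom t : ℝ[X] →+* ℝ) : ℝ[X] → ℝ) from rfl,
    RingHom.map_det]
  congr 1
  ext i j
  by_cases h : i = j <;>
    simp [h, charmatrix_apply, Matrix.one_apply, Matrix.diagonal_apply, Matrix.sub_apply]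

lemma det_smul_one_sub {d : ℕ} (M : Matrix (Fin d) (Fin d) ℝ) (hM : M.IsHermitian) (t : ℝ) :
    det (t • (1 : Matrix (Fin d) (Fin d) ℝ) - M) = ∏ i, (t - hM.eigenvalues i) := by
  set U : Matrix (Fin d) (Fin d) ℝ := (hM.eigenvectorUnitary : Matrix (Fin d) (Fin d) ℝ) with hUdef
  have hU : U * star U = 1 := (Matrix.mem_unitaryGroup_iff).mp hM.eigenvectorUnitary.2
  have hUs : star U * U = 1 := (Matrix.mem_unitaryGroup_iff').mp hM.eigenvectorUnitary.2
  have hspec := hM.spectral_theorem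
  have key : t • (1 : Matrix (Fin d) (Fin d) ℝ) - M
      = U * (t • (1 : Matrix (Fin d) (Fin d) ℝ) - diagonal (RCLike.ofReal ∘ hM.eigenvalues)) * star U := by
    have h1 : U * (t • (1 : Matrix (Fin d) (Fin d) ℝ)) * star U = t • (1 : Matrix (Fin d) (Fin d) ℝ) := by
      rw [Matrix.mul_smul, Matrix.smul_mul, Matrix.mul_one, hU]
    have hspec' : M = U * diagonal (RCLike.ofReal ∘ hM.eigenvalues) * star U := by
      rw [Unitary.conjStarAlgAut_apply] at hspec; exact hspec
    rw [Matrix.mul_sub, Matrix.sub_mul, h1, ← hspec']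
  rw [key, det_mul, det_mul, mul_comm, ← mul_assoc, ← det_mul, hUs, det_one, one_mul,
    show t • (1 : Matrix (Fin d) (Fin d) ℝ) - diagonal (RCLike.ofReal ∘ hM.eigenvalues)
      = diagonal (fun i => t - hM.eigenvalues i) by
        rw [Matrix.smul_one_eq_diagonal, diagonal_sub]; rfl,
    det_diagonal]

lemma ev_multiset_eq {d : ℕ} (M : Matrix (Fin d) (Fin d) ℝ) (hM : M.IsHermitian) (ev : Fin d → ℝ)
    (hcp : M.charpoly = ∏ i, (X - C (ev i))) :
    Multiset.map ev Finset.univ.val = Multiset.map hM.eigenvalues Finset.univ.val := by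
  have hpoly : (∏ i, (X - C (ev i))) = ∏ i, (X - C (hM.eigenvalues i)) := by
    apply Polynomial.funext; intro t
    have h1 : ∀ f : Fin d → ℝ, Polynomial.eval t (∏ i, (X - C (f i))) = ∏ i, (t - f i) := by
      intro f; simp [eval_prod]
    rw [h1, h1, ← det_smul_one_sub M hM, ← charpoly_eval, hcp, h1]
  have := congrArg Polynomial.roots hpoly
  rwa [Finset.prod_eq_multiset_prod, Finset.prod_eq_multiset_prod,
    show (Finset.univ.val.map fun i => X - C (ev i)) = (Finset.univ.val.map ev).map fun a => X - C a by
      rw [Multiset.map_map]; rfl,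
    show (Finset.univ.val.map fun i => X - C (hM.eigenvalues i)) = (Finset.univ.val.map hM.eigenvalues).map fun a => X - C a by
      rw [Multiset.map_map]; rfl,
    Polynomial.roots_multiset_prod_X_sub_C, Polynomial.roots_multiset_prod_X_sub_C] at this

lemma count_eq {d : ℕ} {f g : Fin d → ℝ}
    (h : Multiset.map f Finset.univ.val = Multiset.map g Finset.univ.val)
    (p : ℝ → Prop) [DecidablePred p] :
    (Finset.univ.filter (fun j => p (f j))).card = (Finset.univ.filter (fun j => p (g j))).card := by
  have h1 : ∀ (f : Fin d → ℝ), (Finset.univ.filter (fun j => p (f j))).card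
      = Multiset.countP p (Multiset.map f Finset.univ.val) := by
    intro f
    rw [Multiset.countP_map]
    rfl
  rw [h1, h1, h]

section helper
variable {ι : Type*} [Fintype ι] [DecidableEq ι]
variable {ι : Type*} [Fintype ι] [DecidableEq ι] {d : ℕ}

lemma sum_dotProduct' {κ : Type*} (s : Finset κ) (f : κ → (Fin d → ℝ)) (v : Fin d → ℝ) :
    (∑ i ∈ s, f i) ⬝ᵥ v = ∑ i ∈ s, f i ⬝ᵥ v := by
  simp only [dotProduct, Finset.sum_apply, Finset.sum_mul]
  exact Finset.sum_comm

lemma dotProduct_sum' {κ : Type*} (s : Finset κ) (v : Fin d → ℝ) (f : κ → (Fin d → ℝ)) :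
    v ⬝ᵥ (∑ i ∈ s, f i) = ∑ i ∈ s, v ⬝ᵥ f i := by
  simp only [dotProduct, Finset.sum_apply, Finset.mul_sum]
  exact Finset.sum_comm

lemma dot_sum_sum (v : ι → (Fin d → ℝ)) (horth : ∀ i j, v i ⬝ᵥ v j = if i = j then 1 else 0)
    (a b : ι → ℝ) :
    (∑ i, a i • v i) ⬝ᵥ (∑ j, b j • v j) = ∑ i, a i * b i := by
  rw [sum_dotProduct']
  simp only [dotProduct_sum', smul_dotProduct, dotProduct_smul,
    smul_eq_mul, horth, mul_ite, mul_one, mul_zero, Finset.sum_ite_eq, Finset.mem_univ, if_true]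

lemma lin_indep (v : ι → (Fin d → ℝ)) (horth : ∀ i j, v i ⬝ᵥ v j = if i = j then 1 else 0) :
    LinearIndependent ℝ v := by
  rw [Fintype.linearIndependent_iff]
  intro g hg i
  have h := congrArg (fun y => y ⬝ᵥ v i) hg
  simp only [sum_dotProduct', smul_dotProduct, smul_eq_mul, horth,
    zero_dotProduct, mul_ite, mul_one, mul_zero, Finset.sum_ite_eq', Finset.mem_univ,
    if_true] at h
  exact h
end helper

lemma span_finrank {d : ℕ} (w : Fin d → (Fin d → ℝ))
    (horth : ∀ i j, w i ⬝ᵥ w j = if i = j then 1 else 0) (S : Finset (Fin d)) :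
    Module.finrank ℝ (Submodule.span ℝ (w '' ↑S)) = S.card := by
  rw [Set.image_eq_range]
  have := finrank_span_eq_card ((lin_indep w horth).comp
    (Subtype.val : ↥(↑S : Set (Fin d)) → Fin d) Subtype.val_injective)
  simpa [Function.comp_def] using this

lemma span_quadform {d : ℕ} (M : Matrix (Fin d) (Fin d) ℝ) (μ : Fin d → ℝ)
    (w : Fin d → (Fin d → ℝ))
    (horth : ∀ i j, w i ⬝ᵥ w j = if i = j then 1 else 0)
    (heig : ∀ j, M *ᵥ w j = μ j • w j)
    (S : Finset (Fin d)) (x : Fin d → ℝ) (hx : x ∈ Submodule.span ℝ (w '' ↑S)) :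
    ∃ c : ↥(↑S : Set (Fin d)) → ℝ,
      x ⬝ᵥ (M *ᵥ x) = ∑ j, μ j.1 * (c j)^2 ∧ x ⬝ᵥ x = ∑ j, (c j)^2 := by
  rw [Set.image_eq_range, Submodule.mem_span_range_iff_exists_fun] at hx
  obtain ⟨c, hc⟩ := hx
  have horth' : ∀ i j : ↥(↑S : Set (Fin d)), w i.1 ⬝ᵥ w j.1 = if i = j then 1 else 0 :=
    fun i j => by rw [horth]; exact if_congr Subtype.coe_inj rfl rfl
  refine ⟨c, ?_, ?_⟩
  · have hMx : M *ᵥ x = ∑ j, (c j * μ j.1) • w j.1 := by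
      rw [← hc, ← Matrix.mulVecLin_apply, map_sum]
      refine Finset.sum_congr rfl fun j _ => ?_
      rw [LinearMap.map_smul, Matrix.mulVecLin_apply, heig, smul_smul]
    rw [hMx, ← hc, dot_sum_sum (fun j : ↥(↑S : Set (Fin d)) => w j.1) horth' c _]
    exact Finset.sum_congr rfl fun j _ => by ring
  · rw [← hc, dot_sum_sum (fun j : ↥(↑S : Set (Fin d)) => w j.1) horth' c c]
    exact Finset.sum_congr rfl fun j _ => by ring


lemma exists_ne_zero_mem_inf (W1 W2 : Submodule ℝ (Fin d → ℝ))
    (hsum : d < finrank ℝ W1 + finrank ℝ W2) :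
    ∃ x : Fin d → ℝ, x ≠ 0 ∧ x ∈ W1 ∧ x ∈ W2 := by
  have h := Submodule.finrank_sup_add_finrank_inf_eq W1 W2
  have h2 : finrank ℝ ↥(W1 ⊔ W2) ≤ d := by
    have := Submodule.finrank_le (W1 ⊔ W2)
    rwa [Module.finrank_fin_fun] at this
  have h3 : 0 < finrank ℝ ↥(W1 ⊓ W2) := by omega
  have h4 : W1 ⊓ W2 ≠ ⊥ := by
    intro hbot
    rw [hbot, finrank_bot] at h3
    omega
  obtain ⟨x, hx, hx0⟩ := Submodule.exists_mem_ne_zero_of_ne_bot h4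
  exact ⟨x, hx0, hx.1, hx.2⟩

lemma finrank_inf_ge (W1 W2 : Submodule ℝ (Fin d → ℝ)) :
    finrank ℝ W1 + finrank ℝ W2 ≤ d + finrank ℝ ↥(W1 ⊓ W2) := by
  have h := Submodule.finrank_sup_add_finrank_inf_eq W1 W2
  have h2 : finrank ℝ ↥(W1 ⊔ W2) ≤ d := by
    have := Submodule.finrank_le (W1 ⊔ W2)
    rwa [Module.finrank_fin_fun] at this
  omega

lemma finrank_ker_ge (v : Fin d → ℝ) :
    ∃ W : Submodule ℝ (Fin d → ℝ), (∀ x ∈ W, v ⬝ᵥ x = 0) ∧ d - 1 ≤ finrank ℝ W := by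
  let f : (Fin d → ℝ) →ₗ[ℝ] ℝ :=
    { toFun := fun x => v ⬝ᵥ x
      map_add' := fun x y => dotProduct_add v x y
      map_smul' := fun c x => by simp [dotProduct_smul] }
  refine ⟨LinearMap.ker f, fun x hx => hx, ?_⟩
  have h := LinearMap.finrank_range_add_finrank_ker f
  have h1 : finrank ℝ (LinearMap.range f) ≤ 1 := by
    have := Submodule.finrank_le (LinearMap.range f)
    simpa using this
  rw [Module.finrank_fin_fun] at h
  omega


lemma eig_exists (M : Matrix (Fin d) (Fin d) ℝ) (hM : M.IsHermitian) :
    ∃ w : Fin d → (Fin d → ℝ),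
      (∀ i j, w i ⬝ᵥ w j = if i = j then 1 else 0) ∧
      (∀ j, M *ᵥ w j = hM.eigenvalues j • w j) := by
  refine ⟨fun j => ⇑(hM.eigenvectorBasis j), fun i j => ?_, hM.mulVec_eigenvectorBasis⟩
  have h := orthonormal_iff_ite.mp hM.eigenvectorBasis.orthonormal i j
  rw [← h]
  simp [PiLp.inner_apply, dotProduct, RCLike.inner_apply, mul_comm]


lemma count_le_ge (ev μ : Fin d → ℝ) (hmono : Monotone ev)
    (hms : Multiset.map ev Finset.univ.val = Multiset.map μ Finset.univ.val) (i : Fin d) :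
    (i : ℕ) + 1 ≤ (Finset.univ.filter (fun j => μ j ≤ ev i)).card ∧
    d - (i : ℕ) ≤ (Finset.univ.filter (fun j => ev i ≤ μ j)).card := by
  constructor
  · rw [← count_eq hms (fun t => t ≤ ev i)]
    calc (i : ℕ) + 1 = (Finset.Iic i).card := (Fin.card_Iic i).symm
    _ ≤ _ := Finset.card_le_card (fun k hk => by
        simp only [Finset.mem_filter, Finset.mem_univ, true_and]
        exact hmono (Finset.mem_Iic.mp hk))
  · rw [← count_eq hms (fun t => ev i ≤ t)]
    calc d - (i : ℕ) = (Finset.Ici i).card := (Fin.card_Ici i).symm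
    _ ≤ _ := Finset.card_le_card (fun k hk => by
        simp only [Finset.mem_filter, Finset.mem_univ, true_and]
        exact hmono (Finset.mem_Ici.mp hk))

lemma dot_self_pos {x : Fin d → ℝ} (hx : x ≠ 0) : 0 < x ⬝ᵥ x := by
  have h0 : 0 ≤ x ⬝ᵥ x := Finset.sum_nonneg fun i _ => mul_self_nonneg (x i)
  rcases h0.eq_or_lt with h | h
  · exact absurd ((dotProduct_self_eq_zero).mp h.symm) hx
  · exact h

lemma quad_le (M : Matrix (Fin d) (Fin d) ℝ) (μ : Fin d → ℝ) (w : Fin d → (Fin d → ℝ))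
    (horth : ∀ i j, w i ⬝ᵥ w j = if i = j then 1 else 0)
    (heig : ∀ j, M *ᵥ w j = μ j • w j)
    (S : Finset (Fin d)) (x : Fin d → ℝ) (hx : x ∈ Submodule.span ℝ (w '' ↑S))
    (t : ℝ) (hb : ∀ j ∈ S, μ j ≤ t) :
    x ⬝ᵥ (M *ᵥ x) ≤ t * (x ⬝ᵥ x) := by
  obtain ⟨c, h1, h2⟩ := span_quadform M μ w horth heig S x hx
  rw [h1, h2, Finset.mul_sum]
  exact Finset.sum_le_sum fun j _ =>
    mul_le_mul_of_nonneg_right (hb j.1 (Finset.mem_coe.mp j.2)) (sq_nonneg _)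

lemma quad_ge (M : Matrix (Fin d) (Fin d) ℝ) (μ : Fin d → ℝ) (w : Fin d → (Fin d → ℝ))
    (horth : ∀ i j, w i ⬝ᵥ w j = if i = j then 1 else 0)
    (heig : ∀ j, M *ᵥ w j = μ j • w j)
    (S : Finset (Fin d)) (x : Fin d → ℝ) (hx : x ∈ Submodule.span ℝ (w '' ↑S))
    (t : ℝ) (hb : ∀ j ∈ S, t ≤ μ j) :
    t * (x ⬝ᵥ x) ≤ x ⬝ᵥ (M *ᵥ x) := by
  obtain ⟨c, h1, h2⟩ := span_quadform M μ w horth heig S x hx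
  rw [h1, h2, Finset.mul_sum]
  exact Finset.sum_le_sum fun j _ =>
    mul_le_mul_of_nonneg_right (hb j.1 (Finset.mem_coe.mp j.2)) (sq_nonneg _)

lemma ev_le_ev {A B : Matrix (Fin d) (Fin d) ℝ} (hA : A.IsHermitian) (hB : B.IsHermitian)
    (hQ : ∀ x, x ⬝ᵥ (B *ᵥ x) ≤ x ⬝ᵥ (A *ᵥ x))
    (evA : Fin d → ℝ) (hmA : Monotone evA) (hcpA : A.charpoly = ∏ i, (X - C (evA i)))
    (evB : Fin d → ℝ) (hmB : Monotone evB) (hcpB : B.charpoly = ∏ i, (X - C (evB i)))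
    (i : Fin d) : evB i ≤ evA i := by
  by_contra hlt
  push_neg at hlt
  obtain ⟨wA, horthA, heigA⟩ := eig_exists A hA
  obtain ⟨wB, horthB, heigB⟩ := eig_exists B hB
  have hmsA := ev_multiset_eq A hA evA hcpA
  have hmsB := ev_multiset_eq B hB evB hcpB
  set SA := Finset.univ.filter (fun j => hA.eigenvalues j ≤ evA i) with hSA
  set SB := Finset.univ.filter (fun j => evB i ≤ hB.eigenvalues j) with hSB
  have cardA : (i : ℕ) + 1 ≤ SA.card := (count_le_ge evA hA.eigenvalues hmA hmsA i).1
  have cardB : d - (i : ℕ) ≤ SB.card := (count_le_ge evB hB.eigenvalues hmB hmsB i).2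
  have hrA := span_finrank wA horthA SA
  have hrB := span_finrank wB horthB SB
  obtain ⟨x, hx0, hx1, hx2⟩ := exists_ne_zero_mem_inf
    (Submodule.span ℝ (wA '' ↑SA)) (Submodule.span ℝ (wB '' ↑SB))
    (by rw [hrA, hrB]; have := i.isLt; omega)
  have h1 : x ⬝ᵥ (A *ᵥ x) ≤ evA i * (x ⬝ᵥ x) :=
    quad_le A hA.eigenvalues wA horthA heigA SA x hx1 (evA i)
      (fun j hj => (Finset.mem_filter.mp hj).2)
  have h2 : evB i * (x ⬝ᵥ x) ≤ x ⬝ᵥ (B *ᵥ x) :=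
    quad_ge B hB.eigenvalues wB horthB heigB SB x hx2 (evB i)
      (fun j hj => (Finset.mem_filter.mp hj).2)
  have h3 := hQ x
  have hxx := dot_self_pos hx0
  nlinarith

lemma ev_ge_ev {A B : Matrix (Fin d) (Fin d) ℝ} (v : Fin d → ℝ)
    (hA : A.IsHermitian) (hB : B.IsHermitian)
    (hQ : ∀ x, v ⬝ᵥ x = 0 → x ⬝ᵥ (A *ᵥ x) ≤ x ⬝ᵥ (B *ᵥ x))
    (evA : Fin d → ℝ) (hmA : Monotone evA) (hcpA : A.charpoly = ∏ i, (X - C (evA i)))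
    (evB : Fin d → ℝ) (hmB : Monotone evB) (hcpB : B.charpoly = ∏ i, (X - C (evB i)))
    (j i : Fin d) (hji : (j : ℕ) < (i : ℕ)) : evA j ≤ evB i := by
  by_contra hlt
  push_neg at hlt
  obtain ⟨wA, horthA, heigA⟩ := eig_exists A hA
  obtain ⟨wB, horthB, heigB⟩ := eig_exists B hB
  have hmsA := ev_multiset_eq A hA evA hcpA
  have hmsB := ev_multiset_eq B hB evB hcpB
  set SA := Finset.univ.filter (fun k => evA j ≤ hA.eigenvalues k) with hSA
  set SB := Finset.univ.filter (fun k => hB.eigenvalues k ≤ evB i) with hSB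
  have cardA : d - (j : ℕ) ≤ SA.card := (count_le_ge evA hA.eigenvalues hmA hmsA j).2
  have cardB : (i : ℕ) + 1 ≤ SB.card := (count_le_ge evB hB.eigenvalues hmB hmsB i).1
  have hrA := span_finrank wA horthA SA
  have hrB := span_finrank wB horthB SB
  obtain ⟨W3, hW3, hW3r⟩ := finrank_ker_ge v
  have hinf := finrank_inf_ge (Submodule.span ℝ (wB '' ↑SB)) W3
  obtain ⟨x, hx0, hx1, hx2⟩ := exists_ne_zero_mem_inf
    (Submodule.span ℝ (wA '' ↑SA)) (Submodule.span ℝ (wB '' ↑SB) ⊓ W3)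
    (by rw [hrA]; have := i.isLt; have := j.isLt; rw [hrB] at hinf; omega)
  have h1 : evA j * (x ⬝ᵥ x) ≤ x ⬝ᵥ (A *ᵥ x) :=
    quad_ge A hA.eigenvalues wA horthA heigA SA x hx1 (evA j)
      (fun k hk => (Finset.mem_filter.mp hk).2)
  have h2 : x ⬝ᵥ (B *ᵥ x) ≤ evB i * (x ⬝ᵥ x) :=
    quad_le B hB.eigenvalues wB horthB heigB SB x hx2.1 (evB i)
      (fun k hk => (Finset.mem_filter.mp hk).2)
  have h3 := hQ x (hW3 x hx2.2)
  have hxx := dot_self_pos hx0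
  nlinarith
end Aux


/-- Eigenvalue interlacing for the BN-reduced matrix `H* = H − Huuᵀ H/(uᵀHu)`:
`H*` is positive semidefinite with `H*u = 0`, and if `λ_1(H*) ≤ ... ≤ λ_d(H*)` and
`λ_1(H) ≤ ... ≤ λ_d(H)` enumerate the eigenvalues (with multiplicity, in increasing
order), then `λ_1(H*) = 0 < λ_1(H)` and `λ_{i-1}(H) ≤ λ_i(H*) ≤ λ_i(H)` for `2 ≤ i ≤ d`. -/
theorem bngd_Hstar_eigenvalue_interlacing
    {d : ℕ} (hd : 2 ≤ d)
    (H : Matrix (Fin d) (Fin d) ℝ) (hH : H.PosDef)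
    (u : Fin d → ℝ) (hu : u ≠ 0)
    (Hs : Matrix (Fin d) (Fin d) ℝ)
    (hHsdef : Hs = H - (u ⬝ᵥ H.mulVec u)⁻¹ • vecMulVec (H.mulVec u) (H.mulVec u))
    -- eigenvalues of H with multiplicity, in increasing order
    (evH : Fin d → ℝ) (hmonoH : Monotone evH)
    (hcpH : H.charpoly = ∏ i, (X - C (evH i)))
    -- eigenvalues of H* with multiplicity, in increasing order
    (evHs : Fin d → ℝ) (hmonoHs : Monotone evHs)
    (hcpHs : Hs.charpoly = ∏ i, (X - C (evHs i))) :
    Hs.PosSemidef ∧ Hs.mulVec u = 0 ∧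
    evHs ⟨0, by omega⟩ = 0 ∧
    evHs ⟨0, by omega⟩ < evH ⟨0, by omega⟩ ∧
    ∀ i : ℕ, ∀ h1 : 1 ≤ i, ∀ h2 : i < d,
      evH ⟨i - 1, by omega⟩ ≤ evHs ⟨i, h2⟩ ∧ evHs ⟨i, h2⟩ ≤ evH ⟨i, h2⟩ := by
  
  set vv : Fin d → ℝ := H *ᵥ u with hvv
  set c : ℝ := u ⬝ᵥ H *ᵥ u with hc
  have hsymm : Hᵀ = H := by
    ext i j
    have := congrFun (congrFun hH.1 i) j
    simpa using this
  have hcpos : 0 < c := by simpa using hH.dotProduct_mulVec_pos hu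
  have hsym2 : ∀ x : Fin d → ℝ, u ⬝ᵥ (H *ᵥ x) = vv ⬝ᵥ x := by
    intro x
    rw [dotProduct_mulVec, ← hsymm, Matrix.vecMul_transpose]
  have hsym1 : ∀ x : Fin d → ℝ, x ⬝ᵥ vv = vv ⬝ᵥ x := fun x => dotProduct_comm x vv
  -- mulVec formula
  have hvmv : ∀ x : Fin d → ℝ, Hs *ᵥ x = H *ᵥ x - (c⁻¹ * (vv ⬝ᵥ x)) • vv := by
    intro x
    rw [hHsdef]
    ext i
    simp [Matrix.sub_mulVec, Matrix.smul_mulVec, Matrix.mulVec, vecMulVec_apply,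
      dotProduct, Finset.mul_sum, Finset.sum_mul]
    rw [← Finset.sum_sub_distrib]
    exact Finset.sum_congr rfl fun k _ => by ring
  have hqf : ∀ x : Fin d → ℝ, x ⬝ᵥ (Hs *ᵥ x) = x ⬝ᵥ (H *ᵥ x) - c⁻¹ * (vv ⬝ᵥ x)^2 := by
    intro x
    rw [hvmv, dotProduct_sub, dotProduct_smul, hsym1, smul_eq_mul]
    ring
  -- Cauchy-Schwarz
  have hcs : ∀ x : Fin d → ℝ, (vv ⬝ᵥ x)^2 ≤ (x ⬝ᵥ (H *ᵥ x)) * c := by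
    intro x
    have hquad : ∀ s : ℝ, 0 ≤ (x ⬝ᵥ (H *ᵥ x)) * (s * s) + (2 * (vv ⬝ᵥ x)) * s + c := by
      intro s
      have h0 := hH.posSemidef.dotProduct_mulVec_nonneg (s • x + u)
      have hexp : (star (s • x + u)) ⬝ᵥ (H *ᵥ (s • x + u))
          = (x ⬝ᵥ (H *ᵥ x)) * (s * s) + (2 * (vv ⬝ᵥ x)) * s + c := by
        have hcu : vv ⬝ᵥ u = c := by rw [← hsym1 u, hc]
        rw [star_trivial]
        simp only [Matrix.mulVec_add, Matrix.mulVec_smul, dotProduct_add, add_dotProduct,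
          dotProduct_smul, smul_dotProduct, smul_eq_mul, hsym2, hsym1, hcu]
        rw [← hvv, hsym1]
        ring
      rw [hexp] at h0
      exact h0
    have hd2 := discrim_le_zero hquad
    rw [discrim] at hd2
    nlinarith
  have hher : Hs.IsHermitian := by
    rw [hHsdef]
    refine Matrix.IsHermitian.sub hH.1 ?_
    ext i j
    simp only [Matrix.conjTranspose_apply, vecMulVec_apply, Matrix.smul_apply, star_trivial,
      smul_eq_mul]
    ring
  have hpsd : Hs.PosSemidef := by
    refine Matrix.PosSemidef.of_dotProduct_mulVec_nonneg hher fun x => ?_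
    rw [star_trivial, hqf]
    have := hcs x
    have h1 : c⁻¹ * (vv ⬝ᵥ x)^2 ≤ c⁻¹ * ((x ⬝ᵥ (H *ᵥ x)) * c) :=
      mul_le_mul_of_nonneg_left this (by positivity)
    rw [← mul_comm c _, ← mul_assoc, inv_mul_cancel₀ hcpos.ne', one_mul] at h1
    linarith
  have hsu : Hs *ᵥ u = 0 := by
    rw [hvmv u, ← hsym1 u, ← hc, mul_comm, mul_inv_cancel₀ hcpos.ne', one_smul, ← hvv,
      sub_self]
  -- multiset equalities
  have hmsA := ev_multiset_eq H hH.1 evH hcpH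
  have hmsB := ev_multiset_eq Hs hher evHs hcpHs
  have hlt0d : (0 : ℕ) < d := by omega
  -- evHs 0 = 0
  have hnonneg : ∀ k : Fin d, 0 ≤ evHs k := by
    intro k
    have hmem : evHs k ∈ Multiset.map evHs Finset.univ.val :=
      Multiset.mem_map_of_mem _ (Finset.mem_univ k).out
    rw [hmsB] at hmem
    obtain ⟨j, _, hj⟩ := Multiset.mem_map.mp hmem
    rw [← hj]
    exact hpsd.eigenvalues_nonneg j
  have hzero : ∃ k : Fin d, evHs k = 0 := by
    have hdet : Hs.det = 0 := Matrix.exists_mulVec_eq_zero_iff.mp ⟨u, hu, hsu⟩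
    have hprod := hher.det_eq_prod_eigenvalues
    rw [hdet] at hprod
    obtain ⟨j, _, hj⟩ := Finset.prod_eq_zero_iff.mp hprod.symm
    have hmem : (0 : ℝ) ∈ Multiset.map hher.eigenvalues Finset.univ.val := by
      rw [← hj]
      exact Multiset.mem_map_of_mem _ (Finset.mem_univ j).out
    rw [← hmsB] at hmem
    obtain ⟨k, _, hk⟩ := Multiset.mem_map.mp hmem
    exact ⟨k, hk⟩
  have hevHs0 : evHs ⟨0, hlt0d⟩ = 0 := by
    obtain ⟨k, hk⟩ := hzero
    have h1 := hmonoHs (show (⟨0, hlt0d⟩ : Fin d) ≤ k from by simp [Fin.le_def])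
    have h2 := hnonneg ⟨0, hlt0d⟩
    rw [hk] at h1
    linarith
  have hevH0 : 0 < evH ⟨0, hlt0d⟩ := by
    have hmem : evH ⟨0, hlt0d⟩ ∈ Multiset.map evH Finset.univ.val :=
      Multiset.mem_map_of_mem _ (Finset.mem_univ _).out
    rw [hmsA] at hmem
    obtain ⟨j, _, hj⟩ := Multiset.mem_map.mp hmem
    rw [← hj]
    exact hH.eigenvalues_pos j
  refine ⟨hpsd, hsu, hevHs0, by rw [hevHs0]; exact hevH0, fun i h1 h2 => ?_⟩
  have hQle : ∀ x, x ⬝ᵥ (Hs *ᵥ x) ≤ x ⬝ᵥ (H *ᵥ x) := by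
    intro x
    rw [hqf]
    have : 0 ≤ c⁻¹ * (vv ⬝ᵥ x)^2 := by positivity
    linarith
  have hQge : ∀ x, vv ⬝ᵥ x = 0 → x ⬝ᵥ (H *ᵥ x) ≤ x ⬝ᵥ (Hs *ᵥ x) := by
    intro x hx
    rw [hqf, hx]
    ring_nf
    exact le_refl _
  constructor
  · exact ev_ge_ev vv hH.1 hher hQge evH hmonoH hcpH evHs hmonoHs hcpHs
      ⟨i - 1, by omega⟩ ⟨i, h2⟩ (by simp; omega)
  · exact ev_le_ev hH.1 hher hQle evH hmonoH hcpH evHs hmonoHs hcpHs ⟨i, h2⟩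
end
end

section
/- The pseudo-condition number of H* is at most the condition number of H: Let H be a d×d real symmetric positive definite matrix (d ≥ 2), u ∈ ℝ^d nonzero, and H* := H − (H u uᵀ H)/(uᵀHu). Then λ_d(H*)/λ_2(H*) ≤ λ_d(H)/λ_1(H), where λ_1(M) ≤ ... ≤ λ_d(M) are the eigenvalues of M in increasing order (so that λ_2(H*) is the smallest nonzero eigenvalue of H* and λ_d(H*) its largest). -/
open Matrix

noncomputable section

namespace BNGDAux

lemma transpose_eq {d : ℕ} {A : Matrix (Fin d) (Fin d) ℝ} (hA : A.IsHermitian) : Aᵀ = A := by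
  rw [← conjTranspose_eq_transpose_of_trivial]; exact hA.eq

lemma dot_symm {d : ℕ} {A : Matrix (Fin d) (Fin d) ℝ} (hA : A.IsHermitian) (x y : Fin d → ℝ) :
    x ⬝ᵥ A *ᵥ y = y ⬝ᵥ A *ᵥ x := by
  rw [dotProduct_mulVec, dotProduct_comm, ← mulVec_transpose, transpose_eq hA]

lemma vmv {d : ℕ} (w x : Fin d → ℝ) : vecMulVec w w *ᵥ x = (w ⬝ᵥ x) • w := by
  funext i
  simp only [vecMulVec_apply, mulVec, dotProduct, Pi.smul_apply, smul_eq_mul, Finset.sum_mul]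
  exact Finset.sum_congr rfl fun j _ => by ring

lemma dot_decomp {d : ℕ} (A : Matrix (Fin d) (Fin d) ℝ) (hA : A.IsHermitian) (v : Fin d → ℝ) :
    v ⬝ᵥ A *ᵥ v = ∑ i, hA.eigenvalues i *
      ((star (hA.eigenvectorUnitary : Matrix (Fin d) (Fin d) ℝ) *ᵥ v) i)^2 := by
  set U : Matrix (Fin d) (Fin d) ℝ := (hA.eigenvectorUnitary : Matrix (Fin d) (Fin d) ℝ) with hU
  have hsU : star U = Uᵀ := by
    rw [Matrix.star_eq_conjTranspose, conjTranspose_eq_transpose_of_trivial]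
  conv_lhs => rw [hA.spectral_theorem, Unitary.conjStarAlgAut_apply]
  rw [← mulVec_mulVec, ← mulVec_mulVec, dotProduct_mulVec, ← mulVec_transpose, hsU]
  simp only [dotProduct, mulVec_diagonal, Function.comp_apply, RCLike.ofReal_real_eq_id, id_eq]
  exact Finset.sum_congr rfl fun i _ => by ring

lemma self_decomp {d : ℕ} (A : Matrix (Fin d) (Fin d) ℝ) (hA : A.IsHermitian) (v : Fin d → ℝ) :
    v ⬝ᵥ v = ∑ i, ((star (hA.eigenvectorUnitary : Matrix (Fin d) (Fin d) ℝ) *ᵥ v) i)^2 := by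
  set U : Matrix (Fin d) (Fin d) ℝ := (hA.eigenvectorUnitary : Matrix (Fin d) (Fin d) ℝ) with hU
  have hsU : star U = Uᵀ := by
    rw [Matrix.star_eq_conjTranspose, conjTranspose_eq_transpose_of_trivial]
  have h1 : U * star U = 1 := mem_unitaryGroup_iff.mp hA.eigenvectorUnitary.2
  rw [show v ⬝ᵥ v = v ⬝ᵥ ((U * star U) *ᵥ v) by rw [h1, one_mulVec]]
  rw [← mulVec_mulVec, dotProduct_mulVec, ← mulVec_transpose, hsU]
  simp only [dotProduct]
  exact Finset.sum_congr rfl fun i _ => by ring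

lemma rayleigh_le {d : ℕ} [NeZero d] (A : Matrix (Fin d) (Fin d) ℝ) (hA : A.IsHermitian)
    (v : Fin d → ℝ) : v ⬝ᵥ A *ᵥ v ≤ (⨆ i, hA.eigenvalues i) * (v ⬝ᵥ v) := by
  rw [dot_decomp A hA v, self_decomp A hA v, Finset.mul_sum]
  refine Finset.sum_le_sum fun i _ => ?_
  exact mul_le_mul_of_nonneg_right
    (le_ciSup (Set.Finite.bddAbove (Set.finite_range _)) i) (sq_nonneg _)

lemma le_rayleigh {d : ℕ} [NeZero d] (A : Matrix (Fin d) (Fin d) ℝ) (hA : A.IsHermitian)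
    (v : Fin d → ℝ) : (⨅ i, hA.eigenvalues i) * (v ⬝ᵥ v) ≤ v ⬝ᵥ A *ᵥ v := by
  rw [dot_decomp A hA v, self_decomp A hA v, Finset.mul_sum]
  refine Finset.sum_le_sum fun i _ => ?_
  exact mul_le_mul_of_nonneg_right
    (ciInf_le (Set.Finite.bddBelow (Set.finite_range _)) i) (sq_nonneg _)

lemma eigvec_dot_one {d : ℕ} {A : Matrix (Fin d) (Fin d) ℝ} (hA : A.IsHermitian) (i : Fin d) :
    (hA.eigenvectorBasis i : Fin d → ℝ) ⬝ᵥ (hA.eigenvectorBasis i : Fin d → ℝ) = 1 := by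
  have h := hA.eigenvectorBasis.orthonormal.1 i
  have h2 : (inner ℝ (hA.eigenvectorBasis i) (hA.eigenvectorBasis i) : ℝ) = 1 := by
    rw [real_inner_self_eq_norm_mul_norm, h]; ring
  rw [← h2, PiLp.inner_apply]
  simp [dotProduct, sq]

end BNGDAux

open BNGDAux in
/-- The pseudo-condition number of `H* = H − Huuᵀ H/(uᵀHu)` is at most the condition
number of `H`: the ratio of the largest eigenvalue of `H*` to its smallest nonzero
eigenvalue is at most `λ_max(H)/λ_min(H)`. -/
theorem bngd_Hstar_condition_number_le
    {d : ℕ} (hd : 2 ≤ d)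
    (H : Matrix (Fin d) (Fin d) ℝ) (hH : H.PosDef)
    (u : Fin d → ℝ) (hu : u ≠ 0)
    (Hs : Matrix (Fin d) (Fin d) ℝ)
    (hHsdef : Hs = H - (u ⬝ᵥ H.mulVec u)⁻¹ • vecMulVec (H.mulVec u) (H.mulVec u))
    (hHs : Hs.IsHermitian) :
    (⨆ i, hHs.eigenvalues i) / (⨅ i : {j : Fin d // hHs.eigenvalues j ≠ 0}, hHs.eigenvalues i.1)
      ≤ (⨆ i, hH.1.eigenvalues i) / (⨅ i, hH.1.eigenvalues i) := by
  have hdNZ : NeZero d := ⟨by omega⟩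
  set w : Fin d → ℝ := H *ᵥ u with hw
  set c : ℝ := u ⬝ᵥ H *ᵥ u with hc
  have hcpos : 0 < c := by
    have := hH.dotProduct_mulVec_pos hu
    simpa using this
  have hcne : c ≠ 0 := ne_of_gt hcpos
  set lmin : ℝ := ⨅ i, hH.1.eigenvalues i with hlmin
  set lmax : ℝ := ⨆ i, hH.1.eigenvalues i with hlmax
  have hlmin_pos : 0 < lmin := by
    obtain ⟨i0, hi0⟩ := Finite.exists_min fun i => hH.1.eigenvalues i
    exact lt_of_lt_of_le (hH.eigenvalues_pos i0) (le_ciInf hi0)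
  have hlmax_pos : 0 < lmax := by
    refine lt_of_lt_of_le (hH.eigenvalues_pos ⟨0, by omega⟩) ?_
    exact le_ciSup (Set.Finite.bddAbove (Set.finite_range _)) _
  -- quadratic form of Hs
  have hQ : ∀ v : Fin d → ℝ, v ⬝ᵥ Hs *ᵥ v = v ⬝ᵥ H *ᵥ v - c⁻¹ * (w ⬝ᵥ v)^2 := by
    intro v
    rw [hHsdef, sub_mulVec, dotProduct_sub, smul_mulVec, vmv, dotProduct_smul,
      dotProduct_smul, dotProduct_comm v w, smul_eq_mul, smul_eq_mul]
    ring
  -- Hs annihilates u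
  have hHsu : Hs *ᵥ u = 0 := by
    rw [hHsdef, sub_mulVec, smul_mulVec, vmv]
    have hwu : w ⬝ᵥ u = c := by rw [dotProduct_comm]
    rw [hwu, ← hw, smul_smul, inv_mul_cancel₀ hcne, one_smul, sub_self]
  -- upper bound on eigenvalues of Hs
  have hupper : ∀ i, hHs.eigenvalues i ≤ lmax := by
    intro i
    set v : Fin d → ℝ := (hHs.eigenvectorBasis i : Fin d → ℝ) with hv
    have hv1 : v ⬝ᵥ v = 1 := eigvec_dot_one hHs i
    have hEv : Hs *ᵥ v = hHs.eigenvalues i • v := hHs.mulVec_eigenvectorBasis i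
    have hmu : hHs.eigenvalues i = v ⬝ᵥ Hs *ᵥ v := by
      rw [hEv, dotProduct_smul, hv1]; simp
    rw [hmu, hQ v]
    have h1 : v ⬝ᵥ H *ᵥ v ≤ lmax := by
      have := rayleigh_le H hH.1 v
      rwa [hv1, mul_one] at this
    nlinarith [sq_nonneg (w ⬝ᵥ v), inv_pos.mpr hcpos]
  -- lower bound on nonzero eigenvalues of Hs
  have hlower : ∀ i, hHs.eigenvalues i ≠ 0 → lmin ≤ hHs.eigenvalues i := by
    intro i hne
    set v : Fin d → ℝ := (hHs.eigenvectorBasis i : Fin d → ℝ) with hv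
    have hv1 : v ⬝ᵥ v = 1 := eigvec_dot_one hHs i
    have hEv : Hs *ᵥ v = hHs.eigenvalues i • v := hHs.mulVec_eigenvectorBasis i
    have hmu : hHs.eigenvalues i = v ⬝ᵥ Hs *ᵥ v := by
      rw [hEv, dotProduct_smul, hv1]; simp
    -- orthogonality to u
    have huv : u ⬝ᵥ v = 0 := by
      have h1 : u ⬝ᵥ Hs *ᵥ v = 0 := by
        rw [dot_symm hHs, hHsu, dotProduct_zero]
      rw [hEv, dotProduct_smul, smul_eq_mul] at h1
      exact (mul_eq_zero.mp h1).resolve_left hne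
    set t : ℝ := (w ⬝ᵥ v) / c with ht
    set z : Fin d → ℝ := v - t • u with hz
    have h1 : u ⬝ᵥ H *ᵥ v = w ⬝ᵥ v := by
      rw [dot_symm hH.1 u v, dotProduct_comm]
    have h2 : v ⬝ᵥ H *ᵥ u = w ⬝ᵥ v := by rw [dotProduct_comm]
    have h3 : u ⬝ᵥ H *ᵥ u = c := rfl
    have hzH : z ⬝ᵥ H *ᵥ z = v ⬝ᵥ H *ᵥ v - c⁻¹ * (w ⬝ᵥ v)^2 := by
      simp only [hz, mulVec_sub, mulVec_smul, sub_dotProduct, dotProduct_sub,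
        smul_dotProduct, dotProduct_smul, smul_eq_mul]
      rw [h1, h2, h3, ht]
      field_simp
      ring
    have huu : 0 ≤ u ⬝ᵥ u := by
      simp only [dotProduct]
      exact Finset.sum_nonneg fun j _ => mul_self_nonneg _
    have hzz : 1 ≤ z ⬝ᵥ z := by
      have hzz' : z ⬝ᵥ z = 1 + t * t * (u ⬝ᵥ u) := by
        simp only [hz, sub_dotProduct, dotProduct_sub, smul_dotProduct, dotProduct_smul,
          smul_eq_mul, hv1, dotProduct_comm v u, huv]
        ring
      rw [hzz']
      nlinarith [mul_self_nonneg t]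
    have hray : lmin * (z ⬝ᵥ z) ≤ z ⬝ᵥ H *ᵥ z := le_rayleigh H hH.1 z
    calc lmin = lmin * 1 := (mul_one _).symm
      _ ≤ lmin * (z ⬝ᵥ z) := by nlinarith
      _ ≤ z ⬝ᵥ H *ᵥ z := hray
      _ = v ⬝ᵥ Hs *ᵥ v := by rw [hzH, hQ v]
      _ = hHs.eigenvalues i := hmu.symm
  rcases isEmpty_or_nonempty {j : Fin d // hHs.eigenvalues j ≠ 0} with hE | hNE
  · have hall : ∀ i, hHs.eigenvalues i = 0 := fun i => by
      by_contra h; exact hE.false ⟨i, h⟩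
    have hS : (⨆ i, hHs.eigenvalues i) = 0 := by
      have : Nonempty (Fin d) := ⟨⟨0, by omega⟩⟩
      simp [funext hall, ciSup_const]
    rw [hS, zero_div]
    exact div_nonneg (le_of_lt hlmax_pos) (le_of_lt hlmin_pos)
  · exact div_le_div₀ (le_of_lt hlmax_pos) (ciSup_le hupper) hlmin_pos
      (le_ciInf fun j => hlower j.1 j.2)
end
end

section
/- Linear convergence of the BN-OLS loss from linear convergence of the residual: Define ẽ_k := u − (a_k/σ(w_k))·w_k (so the loss is J_k = ½‖ẽ_k‖²_H) and e_k := u − (w_kᵀg/σ(w_k)²)·w_k. Then the identity ‖ẽ_k‖²_H = ‖e_k‖²_H + (a_k − w_kᵀg/σ(w_k))² holds, and if ε_a ∈ (0, 1] and ‖e_k‖_H ≤ C·ρ^k for some C > 0 and ρ ∈ (0, 1), then there exists a constant C₂ > 0 (depending on ε, H, u, w₀ and C) such that ‖ẽ_k‖²_H ≤ C²ρ^{2k} + (C₁(1 − ε_a)^k + C₂·k·γ^k)² for all k, where γ := max(ρ, 1 − ε_a) and C₁ := |a₀ − w₀ᵀg/σ(w₀)|; in particular the loss converges to 0 linearly when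 ρ < 1 and ε_a > 0. -/
open Matrix Filter Topology

noncomputable section

namespace BNGDAux

variable {d : ℕ} (H : Matrix (Fin d) (Fin d) ℝ)

lemma hsymm (hH : H.IsHermitian) (v z : Fin d → ℝ) :
    v ⬝ᵥ H.mulVec z = z ⬝ᵥ H.mulVec v := by
  rw [Matrix.dotProduct_mulVec, ← Matrix.mulVec_transpose, dotProduct_comm]
  congr 1
  rw [show Hᵀ = H from hH]

lemma qnonneg (hH : H.PosDef) (v : Fin d → ℝ) : 0 ≤ v ⬝ᵥ H.mulVec v := by
  simpa using hH.posSemidef.dotProduct_mulVec_nonneg v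

lemma qpos (hH : H.PosDef) {v : Fin d → ℝ} (hv : v ≠ 0) : 0 < v ⬝ᵥ H.mulVec v := by
  simpa using hH.dotProduct_mulVec_pos hv

lemma ecs (v z : Fin d → ℝ) : (v ⬝ᵥ z)^2 ≤ (v ⬝ᵥ v) * (z ⬝ᵥ z) := by
  simpa [dotProduct, pow_two] using
    Finset.sum_mul_sq_le_sq_mul_sq Finset.univ v z

lemma qexpand (hH : H.PosDef) (v z : Fin d → ℝ) (c : ℝ) :
    (v + c • z) ⬝ᵥ H.mulVec (v + c • z)
      = v ⬝ᵥ H.mulVec v + 2*c*(v ⬝ᵥ H.mulVec z) + c^2*(z ⬝ᵥ H.mulVec z) := by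
  have h := hsymm H hH.isHermitian z v
  simp [Matrix.mulVec_add, Matrix.mulVec_smul, dotProduct_add, add_dotProduct,
    dotProduct_smul, smul_dotProduct, smul_eq_mul, h]
  ring

lemma qcs (hH : H.PosDef) (v z : Fin d → ℝ) :
    (v ⬝ᵥ H.mulVec z)^2 ≤ (v ⬝ᵥ H.mulVec v) * (z ⬝ᵥ H.mulVec z) := by
  have key : ∀ t : ℝ, 0 ≤ (z ⬝ᵥ H.mulVec z) * (t*t) + (2*(v ⬝ᵥ H.mulVec z)) * t
      + (v ⬝ᵥ H.mulVec v) := by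
    intro t
    have h := qnonneg H hH (v + t • z)
    rw [qexpand H hH v z t] at h
    nlinarith [h]
  have hd := discrim_le_zero (a := z ⬝ᵥ H.mulVec z) (b := 2*(v ⬝ᵥ H.mulVec z)) (c := v ⬝ᵥ H.mulVec v) key
  rw [discrim] at hd
  nlinarith [hd]

lemma opbound (A : Matrix (Fin d) (Fin d) ℝ) :
    ∃ K > (0:ℝ), ∀ v : Fin d → ℝ, (A.mulVec v) ⬝ᵥ (A.mulVec v) ≤ K * (v ⬝ᵥ v) := by
  refine ⟨(∑ i, ∑ j, (A i j)^2) + 1, by positivity, fun v => ?_⟩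
  have hvv : (0:ℝ) ≤ v ⬝ᵥ v := by
    simpa [dotProduct, pow_two] using Finset.sum_nonneg (fun i _ => sq_nonneg (v i) )
  have h1 : (A.mulVec v) ⬝ᵥ (A.mulVec v) ≤ (∑ i, ∑ j, (A i j)^2) * (v ⬝ᵥ v) := by
    have : (A.mulVec v) ⬝ᵥ (A.mulVec v) = ∑ i, (∑ j, A i j * v j)^2 := by
      simp [dotProduct, Matrix.mulVec, pow_two]
    rw [this, Finset.sum_mul]
    refine Finset.sum_le_sum (fun i _ => ?_)
    have := Finset.sum_mul_sq_le_sq_mul_sq Finset.univ (fun j => A i j) v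
    simpa [dotProduct, pow_two] using this
  nlinarith


lemma mlow (hH : H.PosDef) :
    ∃ m > (0:ℝ), ∀ v : Fin d → ℝ, m * (v ⬝ᵥ v) ≤ v ⬝ᵥ H.mulVec v := by
  obtain ⟨K, hK, hKb⟩ := opbound H⁻¹
  have hsK : 0 < Real.sqrt K := Real.sqrt_pos.mpr hK
  refine ⟨1 / Real.sqrt K, by positivity, fun v => ?_⟩
  by_cases hv : v = 0
  · simp [hv]
  have hinv : H.mulVec (H⁻¹.mulVec v) = v := by
    rw [Matrix.mulVec_mulVec, Matrix.mul_nonsing_inv _ hH.det_pos.ne'.isUnit,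
      Matrix.one_mulVec]
  set z := H⁻¹.mulVec v with hz
  have h1 : v ⬝ᵥ v = v ⬝ᵥ H.mulVec z := by rw [hinv]
  have h2 := qcs H hH v z
  have h3 : z ⬝ᵥ H.mulVec z = z ⬝ᵥ v := by rw [hinv]
  have h4 := ecs z v
  have h5 := hKb v
  have hvv : 0 < v ⬝ᵥ v := by
    have := qpos (1 : Matrix (Fin d) (Fin d) ℝ) Matrix.PosDef.one hv
    simpa using this
  have h6 : z ⬝ᵥ v ≤ Real.sqrt K * (v ⬝ᵥ v) := by
    have hb : (z ⬝ᵥ v)^2 ≤ (Real.sqrt K * (v ⬝ᵥ v))^2 := by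
      have : (Real.sqrt K * (v ⬝ᵥ v))^2 = K * ((v ⬝ᵥ v) * (v ⬝ᵥ v)) := by
        rw [mul_pow, Real.sq_sqrt hK.le]; ring
      rw [this]
      nlinarith [h4, h5, hvv.le]
    calc z ⬝ᵥ v ≤ |z ⬝ᵥ v| := le_abs_self _
      _ = Real.sqrt ((z ⬝ᵥ v)^2) := (Real.sqrt_sq_eq_abs _).symm
      _ ≤ Real.sqrt ((Real.sqrt K * (v ⬝ᵥ v))^2) := Real.sqrt_le_sqrt hb
      _ = Real.sqrt K * (v ⬝ᵥ v) := Real.sqrt_sq (by positivity)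
  have h7 : (v ⬝ᵥ v)^2 ≤ (v ⬝ᵥ H.mulVec v) * (Real.sqrt K * (v ⬝ᵥ v)) := by
    calc (v ⬝ᵥ v)^2 = (v ⬝ᵥ H.mulVec z)^2 := by rw [← h1]
      _ ≤ (v ⬝ᵥ H.mulVec v) * (z ⬝ᵥ H.mulVec z) := h2
      _ = (v ⬝ᵥ H.mulVec v) * (z ⬝ᵥ v) := by rw [h3]
      _ ≤ (v ⬝ᵥ H.mulVec v) * (Real.sqrt K * (v ⬝ᵥ v)) := by
          exact mul_le_mul_of_nonneg_left h6 (qnonneg H hH v)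
  rw [div_mul_eq_mul_div, one_mul, div_le_iff₀ hsK]
  nlinarith [h7, hvv, qnonneg H hH v]

lemma abs_q_le (hH : H.PosDef) (v z : Fin d → ℝ) :
    |v ⬝ᵥ H.mulVec z| ≤ Real.sqrt (v ⬝ᵥ H.mulVec v) * Real.sqrt (z ⬝ᵥ H.mulVec z) := by
  rw [← Real.sqrt_sq_eq_abs, ← Real.sqrt_mul (qnonneg H hH v)]
  exact Real.sqrt_le_sqrt (qcs H hH v z)

lemma nh_add (hH : H.PosDef) (v z : Fin d → ℝ) :
    Real.sqrt ((v + z) ⬝ᵥ H.mulVec (v + z))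
      ≤ Real.sqrt (v ⬝ᵥ H.mulVec v) + Real.sqrt (z ⬝ᵥ H.mulVec z) := by
  have h1 : (v + z) ⬝ᵥ H.mulVec (v + z)
      ≤ (Real.sqrt (v ⬝ᵥ H.mulVec v) + Real.sqrt (z ⬝ᵥ H.mulVec z))^2 := by
    have he : (v + z) ⬝ᵥ H.mulVec (v + z)
        = v ⬝ᵥ H.mulVec v + 2*1*(v ⬝ᵥ H.mulVec z) + 1^2*(z ⬝ᵥ H.mulVec z) := by
      simpa using qexpand H hH v z 1
    have h2 : v ⬝ᵥ H.mulVec z ≤ |v ⬝ᵥ H.mulVec z| := le_abs_self _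
    have h3 := abs_q_le H hH v z
    have h4 := Real.sq_sqrt (qnonneg H hH v)
    have h5 := Real.sq_sqrt (qnonneg H hH z)
    nlinarith [h2, h3, h4, h5]
  calc Real.sqrt ((v + z) ⬝ᵥ H.mulVec (v + z))
      ≤ Real.sqrt ((Real.sqrt (v ⬝ᵥ H.mulVec v) + Real.sqrt (z ⬝ᵥ H.mulVec z))^2) :=
        Real.sqrt_le_sqrt h1
    _ = _ := Real.sqrt_sq (by positivity)

lemma nh_smul (c : ℝ) (v : Fin d → ℝ) :
    Real.sqrt ((c • v) ⬝ᵥ H.mulVec (c • v)) = |c| * Real.sqrt (v ⬝ᵥ H.mulVec v) := by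
  have : (c • v) ⬝ᵥ H.mulVec (c • v) = c^2 * (v ⬝ᵥ H.mulVec v) := by
    simp [Matrix.mulVec_smul, smul_dotProduct, dotProduct_smul, smul_eq_mul]
    ring
  rw [this, Real.sqrt_mul (sq_nonneg c), Real.sqrt_sq_eq_abs]

end BNGDAux


namespace BNGDAux
variable {d : ℕ} (H : Matrix (Fin d) (Fin d) ℝ)

lemma ednn (v : Fin d → ℝ) : (0:ℝ) ≤ v ⬝ᵥ v := by
  have : v ⬝ᵥ v = ∑ i, (v i)^2 := by simp [dotProduct, pow_two]
  rw [this]; positivity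

lemma edpos {v : Fin d → ℝ} (hv : v ≠ 0) : (0:ℝ) < v ⬝ᵥ v := by
  have := qpos (1 : Matrix (Fin d) (Fin d) ℝ) Matrix.PosDef.one hv
  simpa using this

lemma le_sqrt_mul {K x y : ℝ} (hK : 0 ≤ K) (hy : 0 ≤ y) (h : x^2 ≤ K * y^2) :
    x ≤ Real.sqrt K * y := by
  calc x ≤ |x| := le_abs_self _
    _ = Real.sqrt (x^2) := (Real.sqrt_sq_eq_abs _).symm
    _ ≤ Real.sqrt (K * y^2) := Real.sqrt_le_sqrt h
    _ = Real.sqrt K * y := by rw [Real.sqrt_mul hK, Real.sqrt_sq hy]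

end BNGDAux

set_option maxHeartbeats 2000000 in
/-- Linear convergence of the BN-OLS loss from linear convergence of the residual:
with `ẽ_k = u − (a_k/σ(w_k))w_k` and `e_k = u − (w_kᵀg/σ(w_k)²)w_k`, the identity
`‖ẽ_k‖²_H = ‖e_k‖²_H + (a_k − w_kᵀg/σ(w_k))²` holds; moreover if `‖e_k‖_H ≤ C ρ^k`
with `ρ ∈ (0,1)` and `ε_a ∈ (0,1]`, then
`‖ẽ_k‖²_H ≤ C²ρ^{2k} + (C₁(1 − ε_a)^k + C₂·k·γ^k)²`, where `γ = max(ρ, 1 − ε_a)` and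
`C₁ = |a₀ − w₀ᵀg/σ(w₀)|`, for some constant `C₂ > 0`. -/
theorem bngd_loss_linear_convergence
    {d : ℕ} (hd : 0 < d)
    (H : Matrix (Fin d) (Fin d) ℝ) (hH : H.PosDef)
    (u : Fin d → ℝ) (hu : u ≠ 0)
    (εa ε : ℝ) (hεa : 0 < εa) (hεa1 : εa ≤ 1) (hε : 0 < ε)
    (g : Fin d → ℝ) (hg : g = H.mulVec u)
    (σ : (Fin d → ℝ) → ℝ) (hσ : ∀ v, σ v = Real.sqrt (v ⬝ᵥ H.mulVec v))
    (a : ℕ → ℝ) (w : ℕ → Fin d → ℝ) (hw0 : w 0 ≠ 0) (hwk : ∀ k, w k ≠ 0)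
    (ha : ∀ k, a (k + 1) = a k + εa * ((w k ⬝ᵥ g) / σ (w k) - a k))
    (hw : ∀ k, w (k + 1) = w k +
      (ε * (a k / σ (w k))) • (g - ((w k ⬝ᵥ g) / (σ (w k)) ^ 2) • H.mulVec (w k)))
    (e : ℕ → Fin d → ℝ)
    (he : ∀ k, e k = u - ((w k ⬝ᵥ g) / (σ (w k)) ^ 2) • w k)
    (et : ℕ → Fin d → ℝ)
    (het : ∀ k, et k = u - (a k / σ (w k)) • w k) :
    (∀ k, et k ⬝ᵥ H.mulVec (et k) =
        e k ⬝ᵥ H.mulVec (e k) + (a k - (w k ⬝ᵥ g) / σ (w k)) ^ 2) ∧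
    (∀ C ρ : ℝ, 0 < C → 0 < ρ → ρ < 1 →
      (∀ k, Real.sqrt (e k ⬝ᵥ H.mulVec (e k)) ≤ C * ρ ^ k) →
      ∃ C₂ > (0 : ℝ), ∀ k : ℕ,
        et k ⬝ᵥ H.mulVec (et k) ≤
          C ^ 2 * ρ ^ (2 * k) +
            (|a 0 - (w 0 ⬝ᵥ g) / σ (w 0)| * (1 - εa) ^ k +
              C₂ * k * (max ρ (1 - εa)) ^ k) ^ 2) := by
  have hsym := BNGDAux.hsymm H hH.isHermitian
  have hσpos : ∀ k, 0 < σ (w k) := fun k => by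
    rw [hσ]; exact Real.sqrt_pos.mpr (BNGDAux.qpos H hH (hwk k))
  have hσsq : ∀ k, (σ (w k))^2 = w k ⬝ᵥ H.mulVec (w k) := fun k => by
    rw [hσ]; exact Real.sq_sqrt (BNGDAux.qnonneg H hH (w k))
  -- e is H-orthogonal to w
  have hQew : ∀ k, e k ⬝ᵥ H.mulVec (w k) = 0 := by
    intro k
    have h1 : u ⬝ᵥ H.mulVec (w k) = w k ⬝ᵥ g := by rw [hsym, hg]
    rw [he k, sub_dotProduct, smul_dotProduct, h1, smul_eq_mul, ← hσsq k,
      div_mul_cancel₀ _ (pow_ne_zero 2 (hσpos k).ne'), sub_self]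
  have part1 : ∀ k, et k ⬝ᵥ H.mulVec (et k) =
      e k ⬝ᵥ H.mulVec (e k) + (a k - (w k ⬝ᵥ g) / σ (w k)) ^ 2 := by
    intro k
    set t : ℝ := (w k ⬝ᵥ g) / (σ (w k))^2 - a k / σ (w k) with ht
    have hetk : et k = e k + t • w k := by
      rw [het k, he k, ht, sub_smul]
      module
    rw [hetk, BNGDAux.qexpand H hH (e k) (w k) t, hQew k, ← hσsq k]
    have hσne : σ (w k) ≠ 0 := (hσpos k).ne'
    simp only [ht]
    field_simp
    ring
  refine ⟨part1, ?_⟩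
  intro C ρ hC hρ0 hρ1 hbound
  obtain ⟨m, hm, hmb⟩ := BNGDAux.mlow H hH
  obtain ⟨K, hK, hKb⟩ := BNGDAux.opbound H
  set Nu : ℝ := Real.sqrt (u ⬝ᵥ H.mulVec u) with hNu
  have hNupos : 0 < Nu := Real.sqrt_pos.mpr (BNGDAux.qpos H hH hu)
  set s : ℕ → ℝ := fun k => (w k ⬝ᵥ g) / σ (w k) with hs
  set b : ℕ → ℝ := fun k => a k - s k with hb
  have hsk : ∀ k, s k = (w k ⬝ᵥ g) / σ (w k) := fun k => rfl
  have hbk : ∀ k, b k = a k - s k := fun k => rfl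
  -- |s k| ≤ Nu
  have hwgle : ∀ k, |w k ⬝ᵥ g| ≤ σ (w k) * Nu := by
    intro k
    have h := BNGDAux.abs_q_le H hH (w k) u
    rw [← hσ (w k)] at h
    calc |w k ⬝ᵥ g| = |w k ⬝ᵥ H.mulVec u| := by rw [hg]
      _ ≤ σ (w k) * Nu := h
  have hsle : ∀ k, |s k| ≤ Nu := by
    intro k
    rw [hsk, abs_div, abs_of_pos (hσpos k), div_le_iff₀ (hσpos k)]
    calc |w k ⬝ᵥ g| ≤ σ (w k) * Nu := hwgle k
      _ = Nu * σ (w k) := mul_comm _ _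
  -- step vector
  set Δ : ℕ → (Fin d → ℝ) := fun k => (ε * (a k / σ (w k))) • H.mulVec (e k) with hΔ
  have hwstep : ∀ k, w (k+1) = w k + Δ k := by
    intro k
    have hrw : g - ((w k ⬝ᵥ g) / (σ (w k))^2) • H.mulVec (w k) = H.mulVec (e k) := by
      rw [he k, Matrix.mulVec_sub, Matrix.mulVec_smul, hg]
    rw [hw k, hrw]
  -- Euclidean norm of w is nondecreasing
  have horth : ∀ k, w k ⬝ᵥ Δ k = 0 := by
    intro k
    rw [hΔ, dotProduct_smul, smul_eq_mul]
    have h2 : w k ⬝ᵥ H.mulVec (e k) = e k ⬝ᵥ H.mulVec (w k) := hsym _ _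
    rw [h2, hQew k, mul_zero]
  have hwmono : ∀ k, w 0 ⬝ᵥ w 0 ≤ w k ⬝ᵥ w k := by
    intro k
    induction k with
    | zero => exact le_refl _
    | succ n ih =>
      have hexp : w (n+1) ⬝ᵥ w (n+1) = w n ⬝ᵥ w n + 2*(w n ⬝ᵥ Δ n) + Δ n ⬝ᵥ Δ n := by
        rw [hwstep n]
        simp [dotProduct_add, add_dotProduct]
        rw [dotProduct_comm (Δ n) (w n)]
        ring
      rw [hexp, horth n]
      have := BNGDAux.ednn (Δ n)
      linarith
  -- lower bound on σ
  set S : ℝ := Real.sqrt (m * (w 0 ⬝ᵥ w 0)) with hS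
  have hSpos : 0 < S := Real.sqrt_pos.mpr (mul_pos hm (BNGDAux.edpos hw0))
  have hσlow : ∀ k, S ≤ σ (w k) := by
    intro k
    rw [hσ, hS]
    apply Real.sqrt_le_sqrt
    calc m * (w 0 ⬝ᵥ w 0) ≤ m * (w k ⬝ᵥ w k) :=
          mul_le_mul_of_nonneg_left (hwmono k) hm.le
      _ ≤ w k ⬝ᵥ H.mulVec (w k) := hmb (w k)
  -- H-norm-squared of e k bound
  have hQee : ∀ k, e k ⬝ᵥ H.mulVec (e k) ≤ (C * ρ^k)^2 := by
    intro k
    have h1 := hbound k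
    have h2 := Real.sq_sqrt (BNGDAux.qnonneg H hH (e k))
    nlinarith [Real.sqrt_nonneg (e k ⬝ᵥ H.mulVec (e k))]
  -- operator bound in the H-norm
  set L2 : ℝ := Real.sqrt K * K / m with hL2
  have hL2pos : 0 < L2 := by
    have := Real.sqrt_pos.mpr hK
    positivity
  have hHeQ : ∀ v : Fin d → ℝ,
      (H.mulVec v) ⬝ᵥ H.mulVec (H.mulVec v) ≤ L2 * (v ⬝ᵥ H.mulVec v) := by
    intro v
    set z : Fin d → ℝ := H.mulVec v with hz
    have step1 : z ⬝ᵥ H.mulVec z ≤ Real.sqrt K * (z ⬝ᵥ z) := by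
      apply BNGDAux.le_sqrt_mul hK.le (BNGDAux.ednn z)
      calc (z ⬝ᵥ H.mulVec z)^2 ≤ (z ⬝ᵥ z) * ((H.mulVec z) ⬝ᵥ (H.mulVec z)) :=
            BNGDAux.ecs z (H.mulVec z)
        _ ≤ (z ⬝ᵥ z) * (K * (z ⬝ᵥ z)) :=
            mul_le_mul_of_nonneg_left (hKb z) (BNGDAux.ednn z)
        _ = K * (z ⬝ᵥ z)^2 := by ring
    have step2 : z ⬝ᵥ z ≤ K * (v ⬝ᵥ v) := hKb v
    have step3 : v ⬝ᵥ v ≤ (1/m) * (v ⬝ᵥ H.mulVec v) := by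
      rw [one_div, inv_mul_eq_div, le_div_iff₀ hm, mul_comm]
      exact hmb v
    have hsK : (0:ℝ) ≤ Real.sqrt K := Real.sqrt_nonneg K
    calc z ⬝ᵥ H.mulVec z ≤ Real.sqrt K * (z ⬝ᵥ z) := step1
      _ ≤ Real.sqrt K * (K * (v ⬝ᵥ v)) := mul_le_mul_of_nonneg_left step2 hsK
      _ ≤ Real.sqrt K * (K * ((1/m) * (v ⬝ᵥ H.mulVec v))) := by
          apply mul_le_mul_of_nonneg_left _ hsK
          exact mul_le_mul_of_nonneg_left step3 hK.le
      _ = L2 * (v ⬝ᵥ H.mulVec v) := by rw [hL2]; field_simp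
  set Lr : ℝ := Real.sqrt L2 with hLr
  have hLrpos : 0 < Lr := Real.sqrt_pos.mpr hL2pos
  -- H-norm of the step
  have hnΔ : ∀ k, Real.sqrt (Δ k ⬝ᵥ H.mulVec (Δ k))
      ≤ (ε * (|b k| + Nu) / S) * (Lr * (C * ρ^k)) := by
    intro k
    rw [hΔ]
    rw [BNGDAux.nh_smul H (ε * (a k / σ (w k))) (H.mulVec (e k))]
    have h1 : Real.sqrt ((H.mulVec (e k)) ⬝ᵥ H.mulVec (H.mulVec (e k)))
        ≤ Lr * (C * ρ^k) := by
      calc Real.sqrt ((H.mulVec (e k)) ⬝ᵥ H.mulVec (H.mulVec (e k)))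
          ≤ Real.sqrt (L2 * (e k ⬝ᵥ H.mulVec (e k))) := Real.sqrt_le_sqrt (hHeQ (e k))
        _ = Lr * Real.sqrt (e k ⬝ᵥ H.mulVec (e k)) := by
            rw [Real.sqrt_mul hL2pos.le, hLr]
        _ ≤ Lr * (C * ρ^k) := mul_le_mul_of_nonneg_left (hbound k) hLrpos.le
    have h2 : |ε * (a k / σ (w k))| ≤ ε * (|b k| + Nu) / S := by
      rw [abs_mul, abs_of_pos hε, abs_div, abs_of_pos (hσpos k)]
      have hak : |a k| ≤ |b k| + Nu := by
        have : a k = b k + s k := by rw [hbk]; ring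
        rw [this]
        calc |b k + s k| ≤ |b k| + |s k| := abs_add_le _ _
          _ ≤ |b k| + Nu := by linarith [hsle k]
      rw [mul_div_assoc]
      apply mul_le_mul_of_nonneg_left _ hε.le
      exact div_le_div₀ (by positivity) hak hSpos (hσlow k)
    exact mul_le_mul h2 h1 (Real.sqrt_nonneg _) (by positivity)
  -- drift bound
  set Λ0 : ℝ := (2 * Nu / S) * (ε / S) * Lr * C with hΛ0
  have hΛ0pos : 0 < Λ0 := by positivity
  have hδ : ∀ k, |s (k+1) - s k| ≤ Λ0 * (|b k| + Nu) * ρ^k := by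
    intro k
    set nΔ : ℝ := Real.sqrt (Δ k ⬝ᵥ H.mulVec (Δ k)) with hnΔk
    have hnΔnn : 0 ≤ nΔ := Real.sqrt_nonneg _
    have hσdiff : |σ (w k) - σ (w (k+1))| ≤ nΔ := by
      rw [abs_sub_le_iff]
      constructor
      · have hwk' : w k = w (k+1) + (-1 : ℝ) • Δ k := by rw [hwstep k]; module
        have h1 : σ (w k) ≤ σ (w (k+1)) + nΔ := by
          rw [hσ (w k), hwk']
          calc Real.sqrt ((w (k+1) + (-1:ℝ) • Δ k) ⬝ᵥ H.mulVec (w (k+1) + (-1:ℝ) • Δ k))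
              ≤ Real.sqrt (w (k+1) ⬝ᵥ H.mulVec (w (k+1)))
                + Real.sqrt (((-1:ℝ) • Δ k) ⬝ᵥ H.mulVec ((-1:ℝ) • Δ k)) :=
                BNGDAux.nh_add H hH _ _
            _ = σ (w (k+1)) + nΔ := by
                rw [BNGDAux.nh_smul H (-1 : ℝ) (Δ k), ← hσ (w (k+1))]
                norm_num
                exact hnΔk.symm
        linarith
      · have h2 : σ (w (k+1)) ≤ σ (w k) + nΔ := by
          rw [hσ (w (k+1)), hwstep k]
          calc Real.sqrt ((w k + Δ k) ⬝ᵥ H.mulVec (w k + Δ k))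
              ≤ Real.sqrt (w k ⬝ᵥ H.mulVec (w k)) + nΔ := BNGDAux.nh_add H hH _ _
            _ = σ (w k) + nΔ := by rw [← hσ (w k)]
        linarith
    have hσ'pos := hσpos (k+1)
    have hσ'low := hσlow (k+1)
    have hsid : s (k+1) - s k = Δ k ⬝ᵥ g / σ (w (k+1))
        + (w k ⬝ᵥ g / σ (w k)) * ((σ (w k) - σ (w (k+1))) / σ (w (k+1))) := by
      have hne1 : σ (w k) ≠ 0 := (hσpos k).ne'
      have hne2 : σ (w (k+1)) ≠ 0 := (hσpos (k+1)).ne'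
      have hg' : w (k+1) ⬝ᵥ g = w k ⬝ᵥ g + Δ k ⬝ᵥ g := by
        rw [hwstep k, add_dotProduct]
      rw [hsk (k+1), hsk k, hg']
      field_simp
      ring
    have hΔg : |Δ k ⬝ᵥ g| ≤ nΔ * Nu := by
      rw [hg]; exact BNGDAux.abs_q_le H hH (Δ k) u
    have hterm1 : |Δ k ⬝ᵥ g / σ (w (k+1))| ≤ nΔ * Nu / S := by
      rw [abs_div, abs_of_pos hσ'pos]
      exact div_le_div₀ (by positivity) hΔg hSpos hσ'low
    have hterm2 : |(w k ⬝ᵥ g / σ (w k)) * ((σ (w k) - σ (w (k+1))) / σ (w (k+1)))|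
        ≤ Nu * (nΔ / S) := by
      have hss : |w k ⬝ᵥ g / σ (w k)| ≤ Nu := by rw [← hsk k]; exact hsle k
      have hdd : |(σ (w k) - σ (w (k+1))) / σ (w (k+1))| ≤ nΔ / S := by
        rw [abs_div, abs_of_pos hσ'pos]
        exact div_le_div₀ hnΔnn hσdiff hSpos hσ'low
      rw [abs_mul]
      exact mul_le_mul hss hdd (abs_nonneg _) hNupos.le
    have key : |s (k+1) - s k| ≤ nΔ * Nu / S + Nu * (nΔ / S) := by
      rw [hsid]
      calc |Δ k ⬝ᵥ g / σ (w (k+1))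
          + (w k ⬝ᵥ g / σ (w k)) * ((σ (w k) - σ (w (k+1))) / σ (w (k+1)))|
          ≤ |Δ k ⬝ᵥ g / σ (w (k+1))|
            + |(w k ⬝ᵥ g / σ (w k)) * ((σ (w k) - σ (w (k+1))) / σ (w (k+1)))| :=
            abs_add_le _ _
        _ ≤ _ := add_le_add hterm1 hterm2
    have hnΔb := hnΔ k
    calc |s (k+1) - s k| ≤ nΔ * Nu / S + Nu * (nΔ / S) := key
      _ = (2*Nu/S) * nΔ := by ring
      _ ≤ (2*Nu/S) * ((ε * (|b k| + Nu) / S) * (Lr * (C * ρ^k))) :=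
          mul_le_mul_of_nonneg_left hnΔb (by positivity)
      _ = Λ0 * (|b k| + Nu) * ρ^k := by rw [hΛ0]; ring
  -- recursion for b
  have hbrec : ∀ k, b (k+1) = (1 - εa) * b k + (s k - s (k+1)) := by
    intro k
    rw [hbk (k+1), hbk k, ha k, ← hsk k]
    ring
  -- stage 1 : uniform bound on |b|
  have hb0Nu : 0 < |b 0| + Nu := by positivity
  have hstage1 : ∀ k, |b k| + Nu
      ≤ (|b 0| + Nu) * Real.exp (Λ0 * ((1 - ρ^k) / (1-ρ))) := by
    intro k
    induction k with
    | zero => simp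
    | succ n ih =>
      have h1 : |b (n+1)| ≤ |b n| + Λ0 * (|b n| + Nu) * ρ^n := by
        rw [hbrec n]
        have e1 : |(1-εa) * b n| ≤ |b n| := by
          rw [abs_mul]
          have h01 : |1 - εa| ≤ 1 := by rw [abs_le]; constructor <;> linarith
          nlinarith [abs_nonneg (b n)]
        have e2 : |s n - s (n+1)| ≤ Λ0 * (|b n| + Nu) * ρ^n := by
          rw [abs_sub_comm]; exact hδ n
        calc |(1-εa) * b n + (s n - s (n+1))|
            ≤ |(1-εa) * b n| + |s n - s (n+1)| := abs_add_le _ _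
          _ ≤ |b n| + Λ0 * (|b n| + Nu) * ρ^n := add_le_add e1 e2
      have h2 : |b (n+1)| + Nu ≤ (|b n| + Nu) * (1 + Λ0 * ρ^n) := by
        have hexp : (|b n| + Nu) * (1 + Λ0 * ρ^n)
            = |b n| + Nu + Λ0 * (|b n| + Nu) * ρ^n := by ring
        rw [hexp]; linarith
      have h3 : (1 : ℝ) + Λ0 * ρ^n ≤ Real.exp (Λ0 * ρ^n) := by
        have := Real.add_one_le_exp (Λ0 * ρ^n); linarith
      calc |b (n+1)| + Nu ≤ (|b n| + Nu) * (1 + Λ0 * ρ^n) := h2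
        _ ≤ ((|b 0| + Nu) * Real.exp (Λ0 * ((1 - ρ^n)/(1-ρ)))) * Real.exp (Λ0 * ρ^n) :=
            mul_le_mul ih h3 (by positivity) (by positivity)
        _ = (|b 0| + Nu) * Real.exp (Λ0 * ((1 - ρ^(n+1))/(1-ρ))) := by
            rw [mul_assoc, ← Real.exp_add]
            congr 2
            have hne : (1:ℝ) - ρ ≠ 0 := by linarith
            field_simp
            ring
  set B : ℝ := (|b 0| + Nu) * Real.exp (Λ0 / (1-ρ)) with hB
  have hBpos : 0 < B := by positivity
  have hbB : ∀ k, |b k| + Nu ≤ B := by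
    intro k
    refine (hstage1 k).trans ?_
    rw [hB]
    apply mul_le_mul_of_nonneg_left _ hb0Nu.le
    apply Real.exp_le_exp.mpr
    have hq : (1 - ρ^k)/(1-ρ) ≤ 1/(1-ρ) := by
      apply div_le_div₀ (by norm_num) _ (by linarith) le_rfl
      have := pow_nonneg hρ0.le k
      linarith
    calc Λ0 * ((1 - ρ^k)/(1-ρ)) ≤ Λ0 * (1/(1-ρ)) :=
        mul_le_mul_of_nonneg_left hq hΛ0pos.le
      _ = Λ0/(1-ρ) := by ring
  -- stage 2
  set γ : ℝ := max ρ (1 - εa) with hγ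
  have hγρ : ρ ≤ γ := le_max_left _ _
  have hγε : 1 - εa ≤ γ := le_max_right _ _
  have hγpos : 0 < γ := lt_of_lt_of_le hρ0 hγρ
  set D : ℝ := Λ0 * B with hD
  have hDpos : 0 < D := mul_pos hΛ0pos hBpos
  have hδD : ∀ k, |s (k+1) - s k| ≤ D * ρ^k := by
    intro k
    calc |s (k+1) - s k| ≤ Λ0 * (|b k| + Nu) * ρ^k := hδ k
      _ ≤ Λ0 * B * ρ^k := by
          apply mul_le_mul_of_nonneg_right _ (pow_nonneg hρ0.le k)
          exact mul_le_mul_of_nonneg_left (hbB k) hΛ0pos.le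
      _ = D * ρ^k := by rw [hD]
  have hstage2 : ∀ k : ℕ, |b k| ≤ |b 0| * (1-εa)^k + (D/γ) * k * γ^k := by
    intro k
    induction k with
    | zero => simp
    | succ n ih =>
      push_cast
      have hεγ : (0:ℝ) ≤ 1 - εa := by linarith
      have h1 : |b (n+1)| ≤ (1-εa) * |b n| + D * ρ^n := by
        rw [hbrec n]
        have e2 := hδD n
        rw [abs_sub_comm (s (n+1)) (s n)] at e2
        calc |(1-εa) * b n + (s n - s (n+1))|
            ≤ |(1-εa) * b n| + |s n - s (n+1)| := abs_add_le _ _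
          _ ≤ (1-εa) * |b n| + D * ρ^n := by
              rw [abs_mul, abs_of_nonneg hεγ]
              linarith
      have hργ : ρ^n ≤ γ^n := pow_le_pow_left₀ hρ0.le hγρ n
      calc |b (n+1)| ≤ (1-εa) * |b n| + D * ρ^n := h1
        _ ≤ (1-εa) * (|b 0| * (1-εa)^n + (D/γ)*n*γ^n) + D * γ^n :=
            add_le_add (mul_le_mul_of_nonneg_left ih hεγ)
              (mul_le_mul_of_nonneg_left hργ hDpos.le)
        _ ≤ |b 0| * (1-εa)^(n+1) + (D/γ)*(n+1)*γ^(n+1) := by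
            have hγne : γ ≠ 0 := hγpos.ne'
            have expand : (1-εa) * (|b 0| * (1-εa)^n + (D/γ)*(n:ℝ)*γ^n) + D * γ^n
                = |b 0| * (1-εa)^(n+1) + (1-εa)*((D/γ)*(n:ℝ)*γ^n) + (D/γ)*γ^(n+1) := by
              rw [pow_succ, pow_succ]
              field_simp
            rw [expand]
            have h2 : (1-εa)*((D/γ)*(n:ℝ)*γ^n) ≤ (D/γ)*(n:ℝ)*γ^(n+1) := by
              rw [pow_succ]
              calc (1-εa)*((D/γ)*(n:ℝ)*γ^n) ≤ γ*((D/γ)*(n:ℝ)*γ^n) :=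
                  mul_le_mul_of_nonneg_right hγε (by positivity)
                _ = (D/γ)*(n:ℝ)*(γ^n*γ) := by ring
            have h4 : (D/γ)*(((n:ℕ):ℝ)+1)*γ^(n+1)
                = (D/γ)*(n:ℝ)*γ^(n+1) + (D/γ)*γ^(n+1) := by ring
            push_cast
            rw [h4]
            linarith
  -- final assembly
  refine ⟨D / γ, by positivity, ?_⟩
  intro k
  rw [part1 k]
  have hb1 : e k ⬝ᵥ H.mulVec (e k) ≤ C^2 * ρ^(2*k) := by
    calc e k ⬝ᵥ H.mulVec (e k) ≤ (C * ρ^k)^2 := hQee k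
      _ = C^2 * ρ^(2*k) := by rw [mul_pow, ← pow_mul, mul_comm k 2]
  have hC1 : |a 0 - (w 0 ⬝ᵥ g)/σ (w 0)| = |b 0| := by rw [hbk 0, hsk 0]
  have hbk' : a k - (w k ⬝ᵥ g)/σ (w k) = b k := by rw [hbk k, hsk k]
  have hbsq : (a k - (w k ⬝ᵥ g)/σ (w k))^2
      ≤ (|a 0 - (w 0 ⬝ᵥ g)/σ (w 0)| * (1-εa)^k + (D/γ)*k*γ^k)^2 := by
    rw [hbk', hC1]
    have h5 := hstage2 k
    calc (b k)^2 = |b k|^2 := (sq_abs _).symm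
      _ ≤ (|b 0| * (1-εa)^k + (D/γ)*k*γ^k)^2 :=
          pow_le_pow_left₀ (abs_nonneg _) h5 2
  linarith [hb1, hbsq]
end
end
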